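/- arXiv:1404.6978 — 11 statements merged into one kernel-verified Lean document; each statement's English description precedes it below -/
import Mathlib

section
/- For every nonnegative integer n, f_n = ∑_{k=0}^{n} C(n+2k,3k)·C(3k,k)·C(2k,k)·(-4)^{n-k}. -/
open Finset
set_option maxHeartbeats 3200000

/-- The Franel numbers: `f n = ∑_{k=0}^n C(n,k)^3`. -/
def franel (n : ℕ) : ℕ := ∑ k ∈ Finset.range (n + 1), (n.choose k) ^ 3

/- LHS sum over ℚ -/
def SL (n : ℕ) : ℚ := ∑ k ∈ Finset.range (n+1), ((n.choose k : ℚ))^3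

/- RHS summand with the (-4)^n factored out -/
def Vq (n k : ℕ) : ℚ :=
  ((n+2*k).choose (3*k) : ℚ) * ((3*k).choose k : ℚ) * ((2*k).choose k : ℚ) * (-1/4)^k

def SR (n : ℕ) : ℚ := ∑ k ∈ Finset.range (n+1), Vq n k

/- certificate for the RHS -/
def gT (n k : ℕ) : ℚ :=
  -24 * k * (3*(n:ℚ)+5) * ((3*k-2).choose (k-1) : ℚ) * ((2*k).choose k : ℚ)
    * ((n+2*k).choose (3*k-2) : ℚ) * (-1/4)^k

def Aq (n k : ℕ) : ℚ := ((n+1).choose k : ℚ) - (n.choose k : ℚ)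
def Bq (n k : ℕ) : ℚ := ((n+2).choose k : ℚ) - 2*((n+1).choose k : ℚ) + (n.choose k : ℚ)

/- certificate for the LHS -/
def gF (n k : ℕ) : ℚ :=
  (-(1 + 17*((k:ℚ)-1) + 50*((k:ℚ)-1)^2 + 5*((n:ℚ)+2-k) + 43*((n:ℚ)+2-k)*((k:ℚ)-1)
      + 14*((n:ℚ)+2-k)^2)) * (Aq n k)^3
  + (-(3 + 21*((k:ℚ)-1) + 28*((k:ℚ)-1)^2)) * (Aq n k)^2 * (Bq n k)
  + (-(3 + 11*((k:ℚ)-1) + 8*((k:ℚ)-1)^2)) * (Aq n k) * (Bq n k)^2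
  - (k:ℚ)^2 * (Bq n k)^3

lemma teleF_main (k m : ℕ) :
    (((k:ℚ)+m)+2)^2 * (((k+m+2).choose k : ℚ))^3
      - (7*((k:ℚ)+m)^2+21*((k:ℚ)+m)+16) * (((k+m+1).choose k : ℚ))^3
      - 8*(((k:ℚ)+m)+1)^2 * (((k+m).choose k : ℚ))^3
    = gF (k+m) (k+1) - gF (k+m) k := by
  have h1n := Nat.choose_succ_right_eq (k+m) k
  rw [show k+m-k = m by omega] at h1n
  have h1 : ((k+m).choose (k+1) : ℚ) * ((k:ℚ)+1) = ((k+m).choose k : ℚ) * m := by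
    exact_mod_cast congrArg (Nat.cast : ℕ → ℚ) h1n
  have h2n := Nat.choose_mul_succ_eq (k+m) k
  rw [show k+m+1-k = m+1 by omega] at h2n
  have h2 : ((k+m).choose k : ℚ) * ((k:ℚ)+m+1) = ((k+m+1).choose k : ℚ) * ((m:ℚ)+1) := by
    exact_mod_cast congrArg (Nat.cast : ℕ → ℚ) h2n
  have h3n := Nat.choose_mul_succ_eq (k+m+1) k
  rw [show k+m+1+1-k = m+2 by omega] at h3n
  have h3 : ((k+m+1).choose k : ℚ) * ((k:ℚ)+m+2) = ((k+m+2).choose k : ℚ) * ((m:ℚ)+2) := by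
    exact_mod_cast congrArg (Nat.cast : ℕ → ℚ) h3n
  have h4 : ((k+m+1).choose (k+1) : ℚ) = ((k+m).choose k : ℚ) + ((k+m).choose (k+1) : ℚ) := by
    exact_mod_cast congrArg (Nat.cast : ℕ → ℚ) (Nat.choose_succ_succ (k+m) k)
  have h5 : ((k+m+2).choose (k+1) : ℚ) = ((k+m+1).choose k : ℚ) + ((k+m+1).choose (k+1) : ℚ) := by
    exact_mod_cast congrArg (Nat.cast : ℕ → ℚ) (Nat.choose_succ_succ (k+m+1) k)
  have hm1 : ((m:ℚ)+1) ≠ 0 := by positivity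
  have hm2 : ((m:ℚ)+2) ≠ 0 := by positivity
  have hk1 : ((k:ℚ)+1) ≠ 0 := by positivity
  have hc : ((k+m).choose k : ℚ)
      = (((k+m).choose k : ℚ) / (((m:ℚ)+1)*((m:ℚ)+2)*((k:ℚ)+1)))
        * (((m:ℚ)+1)*((m:ℚ)+2)*((k:ℚ)+1)) := by field_simp
  set c' : ℚ := ((k+m).choose k : ℚ) / (((m:ℚ)+1)*((m:ℚ)+2)*((k:ℚ)+1)) with hc'def
  have ex1 : ((k+m+1).choose k : ℚ) = c' * (((k:ℚ)+m+1)*((m:ℚ)+2)*((k:ℚ)+1)) := by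
    apply mul_right_cancel₀ hm1
    calc ((k+m+1).choose k : ℚ) * ((m:ℚ)+1) = ((k+m).choose k : ℚ) * ((k:ℚ)+m+1) := h2.symm
    _ = c' * (((k:ℚ)+m+1)*((m:ℚ)+2)*((k:ℚ)+1)) * ((m:ℚ)+1) := by rw [hc]; ring
  have ex2 : ((k+m+2).choose k : ℚ) = c' * (((k:ℚ)+m+1)*((k:ℚ)+m+2)*((k:ℚ)+1)) := by
    apply mul_right_cancel₀ hm2
    calc ((k+m+2).choose k : ℚ) * ((m:ℚ)+2) = ((k+m+1).choose k : ℚ) * ((k:ℚ)+m+2) := h3.symm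
    _ = c' * (((k:ℚ)+m+1)*((k:ℚ)+m+2)*((k:ℚ)+1)) * ((m:ℚ)+2) := by rw [ex1]; ring
  have ed : ((k+m).choose (k+1) : ℚ) = c' * ((m:ℚ)*((m:ℚ)+1)*((m:ℚ)+2)) := by
    apply mul_right_cancel₀ hk1
    calc ((k+m).choose (k+1) : ℚ) * ((k:ℚ)+1) = ((k+m).choose k : ℚ) * (m:ℚ) := h1
    _ = c' * ((m:ℚ)*((m:ℚ)+1)*((m:ℚ)+2)) * ((k:ℚ)+1) := by rw [hc]; ring
  simp only [gF, Aq, Bq]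
  rw [h5, h4, ex2, ex1, ed, hc]
  push_cast
  ring

lemma teleF (n k : ℕ) :
    ((n:ℚ)+2)^2 * (((n+2).choose k : ℚ))^3
      - (7*(n:ℚ)^2+21*(n:ℚ)+16) * (((n+1).choose k : ℚ))^3
      - 8*((n:ℚ)+1)^2 * ((n.choose k : ℚ))^3
    = gF n (k+1) - gF n k := by
  rcases le_or_gt k n with h | h
  · obtain ⟨m, rfl⟩ := Nat.exists_eq_add_of_le h
    have := teleF_main k m
    push_cast
    linear_combination this
  · rcases (by omega : k = n+1 ∨ k = n+2 ∨ n+3 ≤ k) with rfl | rfl | h3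
    · have z1 : n.choose (n+1) = 0 := Nat.choose_eq_zero_of_lt (by omega)
      have z2 : n.choose (n+1+1) = 0 := Nat.choose_eq_zero_of_lt (by omega)
      have z3 : (n+1).choose (n+1+1) = 0 := Nat.choose_eq_zero_of_lt (by omega)
      have v1 : (n+2).choose (n+1) = n+2 := Nat.choose_succ_self_right (n+1)
      have v2 : (n+2).choose (n+1+1) = 1 := Nat.choose_self (n+2)
      have v3 : (n+1).choose (n+1) = 1 := Nat.choose_self (n+1)
      simp only [gF, Aq, Bq, z1, z2, z3, v1, v2, v3]
      push_cast
      ring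
    · have z1 : n.choose (n+2) = 0 := Nat.choose_eq_zero_of_lt (by omega)
      have z2 : n.choose (n+2+1) = 0 := Nat.choose_eq_zero_of_lt (by omega)
      have z3 : (n+1).choose (n+2) = 0 := Nat.choose_eq_zero_of_lt (by omega)
      have z4 : (n+1).choose (n+2+1) = 0 := Nat.choose_eq_zero_of_lt (by omega)
      have z5 : (n+2).choose (n+2+1) = 0 := Nat.choose_eq_zero_of_lt (by omega)
      have v1 : (n+2).choose (n+2) = 1 := Nat.choose_self (n+2)
      simp only [gF, Aq, Bq, z1, z2, z3, z4, z5, v1]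
      push_cast
      ring
    · have z1 : n.choose k = 0 := Nat.choose_eq_zero_of_lt (by omega)
      have z2 : n.choose (k+1) = 0 := Nat.choose_eq_zero_of_lt (by omega)
      have z3 : (n+1).choose k = 0 := Nat.choose_eq_zero_of_lt (by omega)
      have z4 : (n+1).choose (k+1) = 0 := Nat.choose_eq_zero_of_lt (by omega)
      have z5 : (n+2).choose k = 0 := Nat.choose_eq_zero_of_lt (by omega)
      have z6 : (n+2).choose (k+1) = 0 := Nat.choose_eq_zero_of_lt (by omega)
      simp only [gF, Aq, Bq, z1, z2, z3, z4, z5, z6]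
      push_cast
      ring


lemma castrel1 (n k s : ℕ) (h : n + 1 - k = s) :
    (n.choose k : ℚ) * ((n:ℚ)+1) = ((n+1).choose k : ℚ) * (s:ℚ) := by
  have := Nat.choose_mul_succ_eq n k
  rw [h] at this
  exact_mod_cast congrArg (Nat.cast : ℕ → ℚ) this

lemma castrel2 (n k s : ℕ) (h : n - k = s) :
    (n.choose (k+1) : ℚ) * ((k:ℚ)+1) = (n.choose k : ℚ) * (s:ℚ) := by
  have := Nat.choose_succ_right_eq n k
  rw [h] at this
  exact_mod_cast congrArg (Nat.cast : ℕ → ℚ) this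

lemma c3fam (j : ℕ) : ∃ u : ℚ,
    ((3*j+3).choose (j+1) : ℚ) = u * ((3*(j:ℚ)+2)*(3*(j:ℚ)+3)*(2*(j:ℚ)+3))
    ∧ ((3*j+1).choose j : ℚ) = u * ((2*(j:ℚ)+3)*(2*(j:ℚ)+2)*((j:ℚ)+1))
    ∧ ((3*j+4).choose (j+1) : ℚ) = u * ((3*(j:ℚ)+2)*(3*(j:ℚ)+3)*(3*(j:ℚ)+4)) := by
  set J : ℚ := (j:ℚ)
  have hJ : (0:ℚ) ≤ J := Nat.cast_nonneg j
  refine ⟨((3*j+3).choose (j+1) : ℚ) / ((3*J+2)*(3*J+3)*(2*J+3)), ?_, ?_, ?_⟩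
  · field_simp
  · have a1 : ((3*j+1).choose j : ℚ) * (3*J+2) = ((3*j+2).choose j : ℚ) * (2*J+2) := by
      have := castrel1 (3*j+1) j (2*j+2) (by omega)
      rw [show 3*j+1+1 = 3*j+2 by omega] at this
      push_cast at this ⊢; linear_combination this
    have a2 : ((3*j+2).choose j : ℚ) * (3*J+3) = ((3*j+3).choose j : ℚ) * (2*J+3) := by
      have := castrel1 (3*j+2) j (2*j+3) (by omega)
      rw [show 3*j+2+1 = 3*j+3 by omega] at this
      push_cast at this ⊢; linear_combination this
    have a3 : ((3*j+3).choose (j+1) : ℚ) * (J+1) = ((3*j+3).choose j : ℚ) * (2*J+3) := by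
      have := castrel2 (3*j+3) j (2*j+3) (by omega)
      push_cast at this ⊢; linear_combination this
    have h0 : ((3*j+3).choose (j+1) : ℚ)
        = (((3*j+3).choose (j+1) : ℚ) / ((3*J+2)*(3*J+3)*(2*J+3))) * ((3*J+2)*(3*J+3)*(2*J+3)) := by
      field_simp
    have eX2 : ((3*j+3).choose j : ℚ)
        = (((3*j+3).choose (j+1) : ℚ) / ((3*J+2)*(3*J+3)*(2*J+3))) * ((3*J+2)*(3*J+3)*(J+1)) := by
      apply mul_right_cancel₀ (show (2*J+3) ≠ 0 by positivity)
      linear_combination -a3 + (J+1)*h0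
    have eX1 : ((3*j+2).choose j : ℚ)
        = (((3*j+3).choose (j+1) : ℚ) / ((3*J+2)*(3*J+3)*(2*J+3))) * ((3*J+2)*(2*J+3)*(J+1)) := by
      apply mul_right_cancel₀ (show (3*J+3) ≠ 0 by positivity)
      linear_combination a2 + (2*J+3)*eX2
    apply mul_right_cancel₀ (show (3*J+2) ≠ 0 by positivity)
    linear_combination a1 + (2*J+2)*eX1
  · have rq3 : ((3*j+3).choose (j+1) : ℚ) * (3*J+4) = ((3*j+4).choose (j+1) : ℚ) * (2*J+3) := by
      have := castrel1 (3*j+3) (j+1) (2*j+3) (by omega)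
      rw [show 3*j+3+1 = 3*j+4 by omega] at this
      push_cast at this ⊢; linear_combination this
    have h0 : ((3*j+3).choose (j+1) : ℚ)
        = (((3*j+3).choose (j+1) : ℚ) / ((3*J+2)*(3*J+3)*(2*J+3))) * ((3*J+2)*(3*J+3)*(2*J+3)) := by
      field_simp
    apply mul_right_cancel₀ (show (2*J+3) ≠ 0 by positivity)
    linear_combination -rq3 + (3*J+4)*h0

lemma c2fam (j : ℕ) : ∃ v : ℚ,
    ((2*j+2).choose (j+1) : ℚ) = v * (((j:ℚ)+2)*((j:ℚ)+2)*((j:ℚ)+3))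
    ∧ ((2*j+4).choose (j+2) : ℚ) = v * ((2*(j:ℚ)+3)*(2*(j:ℚ)+4)*((j:ℚ)+3)) := by
  set J : ℚ := (j:ℚ)
  have hJ : (0:ℚ) ≤ J := Nat.cast_nonneg j
  refine ⟨((2*j+2).choose (j+1) : ℚ) / ((J+2)*(J+2)*(J+3)), ?_, ?_⟩
  · field_simp
  · have t1 : ((2*j+2).choose (j+1) : ℚ) * (2*J+3) = ((2*j+3).choose (j+1) : ℚ) * (J+2) := by
      have := castrel1 (2*j+2) (j+1) (j+2) (by omega)
      rw [show 2*j+2+1 = 2*j+3 by omega] at this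
      push_cast at this ⊢; linear_combination this
    have t2 : ((2*j+3).choose (j+1) : ℚ) * (2*J+4) = ((2*j+4).choose (j+1) : ℚ) * (J+3) := by
      have := castrel1 (2*j+3) (j+1) (j+3) (by omega)
      rw [show 2*j+3+1 = 2*j+4 by omega] at this
      push_cast at this ⊢; linear_combination this
    have t3 : ((2*j+4).choose (j+2) : ℚ) * (J+2) = ((2*j+4).choose (j+1) : ℚ) * (J+3) := by
      have := castrel2 (2*j+4) (j+1) (j+3) (by omega)
      rw [show j+1+1 = j+2 by omega] at this
      push_cast at this ⊢; linear_combination this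
    have h0 : ((2*j+2).choose (j+1) : ℚ)
        = (((2*j+2).choose (j+1) : ℚ) / ((J+2)*(J+2)*(J+3))) * ((J+2)*(J+2)*(J+3)) := by
      field_simp
    have eY1 : ((2*j+3).choose (j+1) : ℚ)
        = (((2*j+2).choose (j+1) : ℚ) / ((J+2)*(J+2)*(J+3))) * ((2*J+3)*(J+2)*(J+3)) := by
      apply mul_right_cancel₀ (show (J+2) ≠ 0 by positivity)
      linear_combination -t1 + (2*J+3)*h0
    have eY2 : ((2*j+4).choose (j+1) : ℚ)
        = (((2*j+2).choose (j+1) : ℚ) / ((J+2)*(J+2)*(J+3))) * ((2*J+3)*(J+2)*(2*J+4)) := by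
      apply mul_right_cancel₀ (show (J+3) ≠ 0 by positivity)
      linear_combination -t2 + (2*J+4)*eY1
    apply mul_right_cancel₀ (show (J+2) ≠ 0 by positivity)
    linear_combination t3 + (J+3)*eY2

lemma rowfam (j m : ℕ) : ∃ e : ℚ,
    ((3*j+m+3).choose (3*j+3) : ℚ) = e * (((m:ℚ)+1)*((m:ℚ)+2)*(3*(j:ℚ)+4))
    ∧ ((3*j+m+4).choose (3*j+3) : ℚ) = e * ((3*(j:ℚ)+(m:ℚ)+4)*((m:ℚ)+2)*(3*(j:ℚ)+4))
    ∧ ((3*j+m+5).choose (3*j+3) : ℚ) = e * ((3*(j:ℚ)+(m:ℚ)+4)*(3*(j:ℚ)+(m:ℚ)+5)*(3*(j:ℚ)+4))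
    ∧ ((3*j+m+3).choose (3*j+1) : ℚ) = e * ((3*(j:ℚ)+3)*(3*(j:ℚ)+2)*(3*(j:ℚ)+4))
    ∧ ((3*j+m+5).choose (3*j+4) : ℚ) = e * ((3*(j:ℚ)+(m:ℚ)+4)*(3*(j:ℚ)+(m:ℚ)+5)*((m:ℚ)+2)) := by
  set J : ℚ := (j:ℚ)
  set M : ℚ := (m:ℚ)
  have hJ : (0:ℚ) ≤ J := Nat.cast_nonneg j
  have hM : (0:ℚ) ≤ M := Nat.cast_nonneg m
  set e : ℚ := ((3*j+m+3).choose (3*j+3) : ℚ) / ((M+1)*(M+2)*(3*J+4)) with hedef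
  have h0 : ((3*j+m+3).choose (3*j+3) : ℚ) = e * ((M+1)*(M+2)*(3*J+4)) := by
    rw [hedef]; field_simp
  have rE1 : ((3*j+m+3).choose (3*j+3) : ℚ) * (3*J+M+4)
      = ((3*j+m+4).choose (3*j+3) : ℚ) * (M+1) := by
    have := castrel1 (3*j+m+3) (3*j+3) (m+1) (by omega)
    rw [show 3*j+m+3+1 = 3*j+m+4 by omega] at this
    push_cast at this ⊢; linear_combination this
  have rE2 : ((3*j+m+4).choose (3*j+3) : ℚ) * (3*J+M+5)
      = ((3*j+m+5).choose (3*j+3) : ℚ) * (M+2) := by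
    have := castrel1 (3*j+m+4) (3*j+3) (m+2) (by omega)
    rw [show 3*j+m+4+1 = 3*j+m+5 by omega] at this
    push_cast at this ⊢; linear_combination this
  have rM1 : ((3*j+m+3).choose (3*j+3) : ℚ) * (3*J+3)
      = ((3*j+m+3).choose (3*j+2) : ℚ) * (M+1) := by
    have := castrel2 (3*j+m+3) (3*j+2) (m+1) (by omega)
    rw [show 3*j+2+1 = 3*j+3 by omega] at this
    push_cast at this ⊢; linear_combination this
  have rM2 : ((3*j+m+3).choose (3*j+2) : ℚ) * (3*J+2)
      = ((3*j+m+3).choose (3*j+1) : ℚ) * (M+2) := by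
    have := castrel2 (3*j+m+3) (3*j+1) (m+2) (by omega)
    rw [show 3*j+1+1 = 3*j+2 by omega] at this
    push_cast at this ⊢; linear_combination this
  have rQ : ((3*j+m+5).choose (3*j+4) : ℚ) * (3*J+4)
      = ((3*j+m+5).choose (3*j+3) : ℚ) * (M+2) := by
    have := castrel2 (3*j+m+5) (3*j+3) (m+2) (by omega)
    rw [show 3*j+3+1 = 3*j+4 by omega] at this
    push_cast at this ⊢; linear_combination this
  have eE1 : ((3*j+m+4).choose (3*j+3) : ℚ) = e * ((3*J+M+4)*(M+2)*(3*J+4)) := by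
    apply mul_right_cancel₀ (show (M+1) ≠ 0 by positivity)
    linear_combination -rE1 + (3*J+M+4)*h0
  have eE2 : ((3*j+m+5).choose (3*j+3) : ℚ) = e * ((3*J+M+4)*(3*J+M+5)*(3*J+4)) := by
    apply mul_right_cancel₀ (show (M+2) ≠ 0 by positivity)
    linear_combination -rE2 + (3*J+M+5)*eE1
  have eMid : ((3*j+m+3).choose (3*j+2) : ℚ) = e * ((3*J+3)*(M+2)*(3*J+4)) := by
    apply mul_right_cancel₀ (show (M+1) ≠ 0 by positivity)
    linear_combination -rM1 + (3*J+3)*h0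
  have eEp : ((3*j+m+3).choose (3*j+1) : ℚ) = e * ((3*J+3)*(3*J+2)*(3*J+4)) := by
    apply mul_right_cancel₀ (show (M+2) ≠ 0 by positivity)
    linear_combination -rM2 + (3*J+2)*eMid
  have eEq2 : ((3*j+m+5).choose (3*j+4) : ℚ) = e * ((3*J+M+4)*(3*J+M+5)*(M+2)) := by
    apply mul_right_cancel₀ (show (3*J+4) ≠ 0 by positivity)
    linear_combination rQ + (M+2)*eE2
  exact ⟨e, h0, eE1, eE2, eEp, eEq2⟩


lemma teleT_main (j m : ℕ) :
    16*(((j:ℚ)+1+m)+2)^2 * Vq (j+1+m+2) (j+1)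
      + 4*(7*((j:ℚ)+1+m)^2+21*((j:ℚ)+1+m)+16) * Vq (j+1+m+1) (j+1)
      - 8*(((j:ℚ)+1+m)+1)^2 * Vq (j+1+m) (j+1)
    = gT (j+1+m) (j+1+1) - gT (j+1+m) (j+1) := by
  obtain ⟨u, hc3, hc3p, hc3q⟩ := c3fam j
  obtain ⟨v, hc2, hc2q⟩ := c2fam j
  obtain ⟨e, hE, hE1, hE2, hEp, hEq2⟩ := rowfam j m
  simp only [Vq, gT]
  rw [show j+1+1 = j+2 by omega]
  rw [show j+1+m+2+2*(j+1) = 3*j+m+5 by omega]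
  rw [show j+1+m+1+2*(j+1) = 3*j+m+4 by omega]
  rw [show j+1+m+2*(j+1) = 3*j+m+3 by omega]
  rw [show j+1+m+2*(j+2) = 3*j+m+5 by omega]
  rw [show 3*(j+1) = 3*j+3 by omega]
  rw [show 2*(j+1) = 2*j+2 by omega]
  rw [show 3*(j+2)-2 = 3*j+4 by omega]
  rw [show j+2-1 = j+1 by omega]
  rw [show 2*(j+2) = 2*j+4 by omega]
  rw [show 3*j+3-2 = 3*j+1 by omega]
  rw [show j+1-1 = j by omega]
  rw [hE, hE1, hE2, hEp, hEq2, hc3, hc3p, hc3q, hc2, hc2q]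
  push_cast
  ring

lemma teleT (n k : ℕ) :
    16*((n:ℚ)+2)^2 * Vq (n+2) k
      + 4*(7*(n:ℚ)^2+21*(n:ℚ)+16) * Vq (n+1) k
      - 8*((n:ℚ)+1)^2 * Vq n k
    = gT n (k+1) - gT n k := by
  rcases (by omega : (k = 0) ∨ (1 ≤ k ∧ k ≤ n) ∨ k = n+1 ∨ k = n+2 ∨ n+3 ≤ k)
    with rfl | ⟨h1, h2⟩ | rfl | rfl | h5
  · -- k = 0
    simp only [Vq, gT]
    norm_num
    ring
  · -- 1 ≤ k ≤ n
    obtain ⟨j, rfl⟩ : ∃ j, k = j+1 := ⟨k-1, by omega⟩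
    obtain ⟨m, rfl⟩ : ∃ m, n = j+1+m := ⟨n-(j+1), by omega⟩
    have := teleT_main j m
    push_cast at this ⊢
    linear_combination this
  · -- k = n+1
    obtain ⟨u, hc3, hc3p, hc3q⟩ := c3fam n
    obtain ⟨v, hc2, hc2q⟩ := c2fam n
    simp only [Vq, gT]
    rw [show n+1+1 = n+2 by omega]
    rw [show n+2+2*(n+1) = 3*n+4 by omega]
    rw [show n+1+2*(n+1) = 3*n+3 by omega]
    rw [show n+2*(n+1) = 3*n+2 by omega]
    rw [show n+2*(n+2) = 3*n+4 by omega]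
    rw [show 3*(n+1) = 3*n+3 by omega]
    rw [show 2*(n+1) = 2*n+2 by omega]
    rw [show 3*(n+2)-2 = 3*n+4 by omega]
    rw [show n+2-1 = n+1 by omega]
    rw [show 2*(n+2) = 2*n+4 by omega]
    rw [show 3*n+3-2 = 3*n+1 by omega]
    rw [show n+1-1 = n by omega]
    rw [show (3*n+4).choose (3*n+3) = 3*n+4 from Nat.choose_succ_self_right (3*n+3)]
    rw [show (3*n+3).choose (3*n+3) = 1 from Nat.choose_self _]
    rw [show (3*n+2).choose (3*n+3) = 0 from Nat.choose_eq_zero_of_lt (by omega)]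
    rw [show (3*n+2).choose (3*n+1) = 3*n+2 from Nat.choose_succ_self_right (3*n+1)]
    rw [show (3*n+4).choose (3*n+4) = 1 from Nat.choose_self _]
    rw [hc3, hc3p, hc3q, hc2, hc2q]
    push_cast
    ring
  · -- k = n+2
    obtain ⟨u, hc3, hc3p, hc3q⟩ := c3fam (n+1)
    obtain ⟨v, hc2, hc2q⟩ := c2fam (n+1)
    rw [show 3*(n+1)+3 = 3*n+6 by omega, show n+1+1 = n+2 by omega] at hc3
    rw [show 3*(n+1)+1 = 3*n+4 by omega] at hc3p
    rw [show 2*(n+1)+2 = 2*n+4 by omega, show n+1+1 = n+2 by omega] at hc2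
    simp only [Vq, gT]
    rw [show n+2+2*(n+2) = 3*n+6 by omega]
    rw [show n+1+2*(n+2) = 3*n+5 by omega]
    rw [show n+2*(n+2) = 3*n+4 by omega]
    rw [show n+2*(n+3) = 3*n+6 by omega]
    rw [show 3*(n+2)-2 = 3*n+4 by omega]
    rw [show 3*(n+3)-2 = 3*n+7 by omega]
    rw [show 3*(n+2) = 3*n+6 by omega]
    rw [show 2*(n+2) = 2*n+4 by omega]
    rw [show n+2-1 = n+1 by omega]
    rw [show (3*n+6).choose (3*n+6) = 1 from Nat.choose_self _]
    rw [show (3*n+5).choose (3*n+6) = 0 from Nat.choose_eq_zero_of_lt (by omega)]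
    rw [show (3*n+4).choose (3*n+6) = 0 from Nat.choose_eq_zero_of_lt (by omega)]
    rw [show (3*n+6).choose (3*n+7) = 0 from Nat.choose_eq_zero_of_lt (by omega)]
    rw [show (3*n+4).choose (3*n+4) = 1 from Nat.choose_self _]
    rw [hc3, hc3p, hc2]
    push_cast
    ring
  · -- n+3 ≤ k
    have z1 : (n+2*k).choose (3*k) = 0 := Nat.choose_eq_zero_of_lt (by omega)
    have z2 : (n+1+2*k).choose (3*k) = 0 := Nat.choose_eq_zero_of_lt (by omega)
    have z3 : (n+2+2*k).choose (3*k) = 0 := Nat.choose_eq_zero_of_lt (by omega)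
    have z4 : (n+2*k).choose (3*k-2) = 0 := Nat.choose_eq_zero_of_lt (by omega)
    have z5 : (n+2*(k+1)).choose (3*(k+1)-2) = 0 := Nat.choose_eq_zero_of_lt (by omega)
    simp only [Vq, gT, z1, z2, z3, z4, z5]
    push_cast
    ring


lemma gT_zero (n : ℕ) : gT n 0 = 0 := by simp [gT]

lemma gT_top (n : ℕ) : gT n (n+3) = 0 := by
  have z : (n+2*(n+3)).choose (3*(n+3)-2) = 0 := Nat.choose_eq_zero_of_lt (by omega)
  simp [gT, z]

lemma Vq_zero {n k : ℕ} (h : n < k) : Vq n k = 0 := by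
  have z : (n+2*k).choose (3*k) = 0 := Nat.choose_eq_zero_of_lt (by omega)
  simp [Vq, z]

lemma recT (n : ℕ) :
    16*((n:ℚ)+2)^2 * SR (n+2) + 4*(7*(n:ℚ)^2+21*(n:ℚ)+16) * SR (n+1)
      - 8*((n:ℚ)+1)^2 * SR n = 0 := by
  have ht := Finset.sum_range_sub (gT n) (n+3)
  have hsum : ∑ k ∈ Finset.range (n+3),
      (16*((n:ℚ)+2)^2 * Vq (n+2) k + 4*(7*(n:ℚ)^2+21*(n:ℚ)+16) * Vq (n+1) k
        - 8*((n:ℚ)+1)^2 * Vq n k) = 0 := by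
    rw [Finset.sum_congr rfl (fun k _ => teleT n k), ht, gT_top, gT_zero]; ring
  rw [Finset.sum_sub_distrib, Finset.sum_add_distrib, ← Finset.mul_sum, ← Finset.mul_sum,
      ← Finset.mul_sum] at hsum
  have e1 : ∑ k ∈ Finset.range (n+3), Vq (n+2) k = SR (n+2) := rfl
  have e2 : ∑ k ∈ Finset.range (n+3), Vq (n+1) k = SR (n+1) := by
    rw [Finset.sum_range_succ, Vq_zero (by omega)]
    simp [SR]
  have e3 : ∑ k ∈ Finset.range (n+3), Vq n k = SR n := by
    rw [Finset.sum_range_succ, Finset.sum_range_succ, Vq_zero (by omega), Vq_zero (by omega)]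
    simp [SR]
  rw [e1, e2, e3] at hsum
  linarith

lemma gF_zero (n : ℕ) : gF n 0 = 0 := by
  simp [gF, Aq, Bq]

lemma gF_top (n : ℕ) : gF n (n+3) = 0 := by
  have z1 : n.choose (n+3) = 0 := Nat.choose_eq_zero_of_lt (by omega)
  have z2 : (n+1).choose (n+3) = 0 := Nat.choose_eq_zero_of_lt (by omega)
  have z3 : (n+2).choose (n+3) = 0 := Nat.choose_eq_zero_of_lt (by omega)
  simp [gF, Aq, Bq, z1, z2, z3]

lemma recF (n : ℕ) :
    ((n:ℚ)+2)^2 * SL (n+2) = (7*(n:ℚ)^2+21*(n:ℚ)+16) * SL (n+1) + 8*((n:ℚ)+1)^2 * SL n := by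
  have ht := Finset.sum_range_sub (gF n) (n+3)
  have hsum : ∑ k ∈ Finset.range (n+3),
      (((n:ℚ)+2)^2 * (((n+2).choose k : ℚ))^3
        - (7*(n:ℚ)^2+21*(n:ℚ)+16) * (((n+1).choose k : ℚ))^3
        - 8*((n:ℚ)+1)^2 * ((n.choose k : ℚ))^3) = 0 := by
    rw [Finset.sum_congr rfl (fun k _ => teleF n k), ht, gF_top, gF_zero]; ring
  rw [Finset.sum_sub_distrib, Finset.sum_sub_distrib, ← Finset.mul_sum, ← Finset.mul_sum,
      ← Finset.mul_sum] at hsum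
  have e1 : ∑ k ∈ Finset.range (n+3), (((n+2).choose k : ℚ))^3 = SL (n+2) := rfl
  have e2 : ∑ k ∈ Finset.range (n+3), (((n+1).choose k : ℚ))^3 = SL (n+1) := by
    rw [Finset.sum_range_succ,
        show (n+1).choose (n+2) = 0 from Nat.choose_eq_zero_of_lt (by omega)]
    simp [SL]
  have e3 : ∑ k ∈ Finset.range (n+3), ((n.choose k : ℚ))^3 = SL n := by
    rw [Finset.sum_range_succ, Finset.sum_range_succ,
        show n.choose (n+2) = 0 from Nat.choose_eq_zero_of_lt (by omega),
        show n.choose (n+1) = 0 from Nat.choose_eq_zero_of_lt (by omega)]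
    simp [SL]
  rw [e1, e2, e3] at hsum
  linarith

lemma key : ∀ n : ℕ, SL n = (-4:ℚ)^n * SR n := by
  intro n
  induction n using Nat.twoStepInduction with
  | zero => norm_num [SL, SR, Vq]
  | one =>
    norm_num [SL, SR, Vq, Finset.sum_range_succ]
  | more n ih0 ih1 =>
    have hr := recF n
    have ht := recT n
    have h2 : ((n:ℚ)+2)^2 ≠ 0 := by positivity
    apply mul_left_cancel₀ h2
    linear_combination hr + (-((-4:ℚ)^n)) * ht + (7*(n:ℚ)^2+21*(n:ℚ)+16) * ih1
      + 8*((n:ℚ)+1)^2 * ih0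

theorem stmt_3 (n : ℕ) :
    (franel n : ℤ) =
      ∑ k ∈ Finset.range (n + 1),
        ((n + 2 * k).choose (3 * k) : ℤ) * ((3 * k).choose k : ℤ) *
          ((2 * k).choose k : ℤ) * (-4) ^ (n - k) := by
  have hQ : ((franel n : ℤ) : ℚ) =
      ((∑ k ∈ Finset.range (n + 1),
        ((n + 2 * k).choose (3 * k) : ℤ) * ((3 * k).choose k : ℤ) *
          ((2 * k).choose k : ℤ) * (-4) ^ (n - k) : ℤ) : ℚ) := by
    push_cast [franel]
    have hL : (∑ k ∈ Finset.range (n+1), ((n.choose k : ℚ))^3) = SL n := rfl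
    rw [hL, key n, SR, Finset.mul_sum]
    apply Finset.sum_congr rfl
    intro k hk
    have hk' : k ≤ n := by
      have := Finset.mem_range.mp hk; omega
    rw [Vq]
    have h4 : ((-4:ℚ))^n = (-4)^(n-k) * (-4)^k := by
      rw [← pow_add]; congr 1; omega
    have h5 : ((-1:ℚ)/4)^k = ((-4:ℚ)^k)⁻¹ := by
      rw [← inv_pow]; norm_num
    have h6 : ((-4:ℚ)^k) ≠ 0 := pow_ne_zero k (by norm_num)
    rw [h5, h4]
    field_simp
  exact_mod_cast hQ
end

section
/- Let n and k be nonnegative integers with k ≤ n. Then, as an identity of integers, 8·(2k+1)·∑_{m=k}^{n-1} (3m+1)·(-16)^{n-m-1}·C(2m,m)·C(m+2k,3k)·(-4)^{m-k} = C(2n,n)·C(n+2k,3k)·n·(k-n)·(-4)^{n-k}. -/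
theorem stmt_4 (n k : ℕ) (hkn : k ≤ n) :
    8 * (2 * k + 1 : ℤ) *
        ∑ m ∈ Finset.Ico k n,
          (3 * m + 1 : ℤ) * (-16) ^ (n - m - 1) * ((2 * m).choose m : ℤ) *
            ((m + 2 * k).choose (3 * k) : ℤ) * (-4) ^ (m - k)
      = ((2 * n).choose n : ℤ) * ((n + 2 * k).choose (3 * k) : ℤ) * n *
          ((k : ℤ) - n) * (-4) ^ (n - k) := by
  induction n, hkn using Nat.le_induction with
  | base => simp
  | succ n hn ih =>
    rw [Finset.sum_Ico_succ_top hn]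
    have hsum : ∑ m ∈ Finset.Ico k n,
        (3 * m + 1 : ℤ) * (-16) ^ (n + 1 - m - 1) * ((2 * m).choose m : ℤ) *
          ((m + 2 * k).choose (3 * k) : ℤ) * (-4) ^ (m - k)
        = -16 * ∑ m ∈ Finset.Ico k n,
          (3 * m + 1 : ℤ) * (-16) ^ (n - m - 1) * ((2 * m).choose m : ℤ) *
            ((m + 2 * k).choose (3 * k) : ℤ) * (-4) ^ (m - k) := by
      rw [Finset.mul_sum]
      refine Finset.sum_congr rfl fun m hm => ?_
      obtain ⟨-, hmn⟩ := Finset.mem_Ico.mp hm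
      rw [show n + 1 - m - 1 = (n - m - 1) + 1 by omega, pow_succ]
      ring
    rw [hsum, show n + 1 - n - 1 = 0 by omega,
      show n + 1 - k = (n - k) + 1 by omega, pow_succ,
      show n + 1 + 2 * k = n + 2 * k + 1 by omega]
    have h1 : ((n : ℤ) + 1) * ((2 * (n + 1)).choose (n + 1) : ℤ)
        = 2 * (2 * n + 1) * ((2 * n).choose n : ℤ) := by
      have := Nat.succ_mul_centralBinom_succ n
      simp only [Nat.centralBinom] at this
      exact_mod_cast this
    have h2 : ((n + 2 * k).choose (3 * k) : ℤ) * ((n : ℤ) + 2 * k + 1)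
        = ((n + 2 * k + 1).choose (3 * k) : ℤ) * ((n : ℤ) + 1 - k) := by
      have h := Nat.choose_mul_succ_eq (n + 2 * k) (3 * k)
      zify [show 3 * k ≤ n + 2 * k + 1 by omega] at h
      linarith
    linear_combination (norm := (push_cast; ring1)) (-16 : ℤ) * ih
      + (-4 * (-4 : ℤ) ^ (n - k) * ((n + 2 * k + 1).choose (3 * k) : ℤ) * ((n : ℤ) + 1 - k)) * h1
      + (8 * (-4 : ℤ) ^ (n - k) * (2 * (n : ℤ) + 1) * ((2 * n).choose n : ℤ)) * h2
end

section
/- Let n be a positive integer. Then, as an identity of rational numbers, ∑_{m=0}^{n-1} (3m+1)·(-16)^{n-m-1}·C(2m,m)·f_m = ∑_{k=0}^{n-1} C(2n,n)·C(n+2k,3k)·C(3k,k)·C(2k,k)·n·(k-n)·(-4)^{n-k} / (8·(2k+1)). -/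
open Finset

lemma chooseR1 (m k : ℕ) : ((k:ℚ)+1) * (m.choose (k+1)) = ((m:ℚ) - k) * (m.choose k) := by
  rcases le_or_gt k m with h | h
  · have h1 := congrArg (Nat.cast : ℕ → ℚ) (Nat.choose_succ_right_eq m k)
    push_cast [Nat.cast_sub h] at h1
    linarith
  · rw [Nat.choose_eq_zero_of_lt h, Nat.choose_eq_zero_of_lt (by omega)]
    simp

lemma chooseR2 (m k : ℕ) : ((m:ℚ)+1-k) * ((m+1).choose k) = ((m:ℚ)+1) * (m.choose k) := by
  rcases le_or_gt k (m+1) with h | h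
  · have h1 := congrArg (Nat.cast : ℕ → ℚ) (Nat.choose_mul_succ_eq m k)
    push_cast [Nat.cast_sub h] at h1
    linarith
  · rw [Nat.choose_eq_zero_of_lt h, Nat.choose_eq_zero_of_lt (by omega)]
    simp

lemma chooseR3 (m k : ℕ) : ((m:ℚ)+1) * (m.choose k) = ((m+1).choose (k+1)) * ((k:ℚ)+1) := by
  have h1 := congrArg (Nat.cast : ℕ → ℚ) (Nat.add_one_mul_choose_eq m k)
  push_cast at h1
  linarith



def Qf (n k : ℚ) : ℚ :=
  (-72-272*n-402*n^2-290*n^3-102*n^4-14*n^5) + k*(78+249*n+291*n^2+147*n^3+27*n^4)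
    + k^2*(-30-78*n-66*n^2-18*n^3) + k^3*(4+8*n+4*n^2)

def Gf (n k : ℕ) : ℚ :=
  (k:ℚ)^3 * Qf (n:ℚ) (k:ℚ) * (((n+2).choose k : ℚ))^3 / (((n:ℚ)+1)^3 * ((n:ℚ)+2)^3)

lemma franel_step (n k : ℕ) :
    ((n:ℚ)+2)^2 * (((n+2).choose k : ℚ))^3 - (7*(n:ℚ)^2+21*n+16) * (((n+1).choose k : ℚ))^3
      - 8*((n:ℚ)+1)^2 * ((n.choose k : ℚ))^3 = Gf n (k+1) - Gf n k := by
  have hx1 : ((n:ℚ)+1) ≠ 0 := by positivity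
  have hx2 : ((n:ℚ)+2) ≠ 0 := by positivity
  have hk : ((k:ℚ)+1) ≠ 0 := by positivity
  have e2 : ((n).choose k : ℚ) = ((n:ℚ)+1-k) * (((n+1)).choose k) / ((n:ℚ)+1) := by
    rw [eq_div_iff hx1]
    linear_combination -chooseR2 n k
  have e1 : (((n+1)).choose k : ℚ) = ((n:ℚ)+2-k) * (((n+2)).choose k) / ((n:ℚ)+2) := by
    rw [eq_div_iff hx2]
    have h := chooseR2 (n+1) k
    rw [show n+1+1 = n+2 by omega] at h
    push_cast at h
    linear_combination -h
  have e3 : (((n+2)).choose (k+1) : ℚ) = ((n:ℚ)+2-k) * (((n+2)).choose k) / ((k:ℚ)+1) := by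
    rw [eq_div_iff hk]
    have h := chooseR1 (n+2) k
    push_cast at h
    linear_combination h
  rw [Gf, Gf, e2, e1, e3]
  push_cast [Qf]
  field_simp
  ring



def fQ (n : ℕ) : ℚ := ∑ k ∈ Finset.range (n+1), ((n.choose k : ℚ))^3

lemma fQ_pad (m N : ℕ) (h : m+1 ≤ N) : fQ m = ∑ k ∈ Finset.range N, ((m.choose k : ℚ))^3 := by
  rw [fQ]
  apply Finset.sum_subset (Finset.range_subset_range.2 h)
  intro x _ hx
  simp only [Finset.mem_range, not_lt] at hx
  rw [Nat.choose_eq_zero_of_lt (by omega)]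
  norm_num

lemma fQ_rec (n : ℕ) : ((n:ℚ)+2)^2 * fQ (n+2)
    = (7*(n:ℚ)^2+21*n+16) * fQ (n+1) + 8*((n:ℚ)+1)^2 * fQ n := by
  have key : ∑ k ∈ Finset.range (n+3),
      (((n:ℚ)+2)^2 * (((n+2).choose k : ℚ))^3 - (7*(n:ℚ)^2+21*n+16) * (((n+1).choose k : ℚ))^3
        - 8*((n:ℚ)+1)^2 * ((n.choose k : ℚ))^3) = 0 := by
    rw [Finset.sum_congr rfl (fun k _ => franel_step n k), Finset.sum_range_sub (Gf n)]
    have h0 : Gf n 0 = 0 := by simp [Gf]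
    have h1 : Gf n (n+3) = 0 := by
      have : (n+2).choose (n+3) = 0 := Nat.choose_eq_zero_of_lt (by omega)
      simp [Gf, this]
    rw [h0, h1]
    ring
  rw [fQ_pad (n+2) (n+3) (by omega), fQ_pad (n+1) (n+3) (by omega), fQ_pad n (n+3) (by omega)]
  simp only [Finset.sum_sub_distrib, ← Finset.mul_sum] at key
  linarith



def Fq (n k : ℕ) : ℚ :=
  (-4:ℚ)^n * (((n+2*k).choose (3*k) : ℚ)) * (((3*k).choose k : ℚ)) * (((2*k).choose k : ℚ))
    / (-4)^k

def Gg (n k : ℕ) : ℚ :=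
  (-4:ℚ)^n * (((n+2+2*k).choose (3*k) : ℚ)) * (((3*k).choose k : ℚ)) * (((2*k).choose k : ℚ))
    * (-48*(k:ℚ)^3*(3*(n:ℚ)+5)) / ((-4)^k * (((n:ℚ)+2+2*k)*((n:ℚ)+1+2*k)))

lemma guo_step (n k : ℕ) :
    ((n:ℚ)+2)^2 * Fq (n+2) k - (7*(n:ℚ)^2+21*n+16) * Fq (n+1) k
      - 8*((n:ℚ)+1)^2 * Fq n k = Gg n (k+1) - Gg n k := by
  have d1 : ((k:ℚ)+1) ≠ 0 := by positivity
  have d2 : (2*(k:ℚ)+1) ≠ 0 := by positivity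
  have d3 : (2*(k:ℚ)+2) ≠ 0 := by positivity
  have d4 : (3*(k:ℚ)+1) ≠ 0 := by positivity
  have d5 : (3*(k:ℚ)+2) ≠ 0 := by positivity
  have d6 : (3*(k:ℚ)+3) ≠ 0 := by positivity
  have d7 : ((n:ℚ)+1+2*k) ≠ 0 := by positivity
  have d8 : ((n:ℚ)+2+2*k) ≠ 0 := by positivity
  have d9 : ((n:ℚ)+3+2*k) ≠ 0 := by positivity
  have d10 : ((n:ℚ)+4+2*k) ≠ 0 := by positivity
  have d11 : ((-4:ℚ))^k ≠ 0 := pow_ne_zero _ (by norm_num)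
  have ew : ((n+2*k).choose (3*k) : ℚ)
      = ((n:ℚ)+1-k) * ((n+1+2*k).choose (3*k)) / ((n:ℚ)+1+2*k) := by
    rw [eq_div_iff d7]
    have h := chooseR2 (n+2*k) (3*k)
    rw [show n+2*k+1 = n+1+2*k by omega] at h
    push_cast at h
    linear_combination -h
  have ev : ((n+1+2*k).choose (3*k) : ℚ)
      = ((n:ℚ)+2-k) * ((n+2+2*k).choose (3*k)) / ((n:ℚ)+2+2*k) := by
    rw [eq_div_iff d8]
    have h := chooseR2 (n+1+2*k) (3*k)
    rw [show n+1+2*k+1 = n+2+2*k by omega] at h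
    push_cast at h
    linear_combination -h
  have ec1 : ((n+3+2*k).choose (3*k+1) : ℚ)
      = ((n:ℚ)+3+2*k) * ((n+2+2*k).choose (3*k)) / (3*(k:ℚ)+1) := by
    rw [eq_div_iff d4]
    have h := chooseR3 (n+2+2*k) (3*k)
    rw [show n+2+2*k+1 = n+3+2*k by omega] at h
    push_cast at h
    linear_combination -h
  have ec2 : ((n+4+2*k).choose (3*k+2) : ℚ)
      = ((n:ℚ)+4+2*k) * ((n+3+2*k).choose (3*k+1)) / (3*(k:ℚ)+2) := by
    rw [eq_div_iff d5]
    have h := chooseR3 (n+3+2*k) (3*k+1)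
    rw [show n+3+2*k+1 = n+4+2*k by omega, show 3*k+1+1 = 3*k+2 by omega] at h
    push_cast at h
    linear_combination -h
  have eu : ((n+4+2*k).choose (3*k+3) : ℚ)
      = ((n:ℚ)+2-k) * ((n+4+2*k).choose (3*k+2)) / (3*(k:ℚ)+3) := by
    rw [eq_div_iff d6]
    have h := chooseR1 (n+4+2*k) (3*k+2)
    rw [show 3*k+2+1 = 3*k+3 by omega] at h
    push_cast at h
    linear_combination h
  have ea1 : ((3*k+1).choose (k+1) : ℚ) = (3*(k:ℚ)+1) * ((3*k).choose k) / ((k:ℚ)+1) := by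
    rw [eq_div_iff d1]
    have h := chooseR3 (3*k) k
    push_cast at h
    linear_combination -h
  have ea2 : ((3*k+2).choose (k+1) : ℚ)
      = (3*(k:ℚ)+2) * ((3*k+1).choose (k+1)) / (2*(k:ℚ)+1) := by
    rw [eq_div_iff d2]
    have h := chooseR2 (3*k+1) (k+1)
    rw [show 3*k+1+1 = 3*k+2 by omega] at h
    push_cast at h
    linear_combination h
  have ea3 : ((3*k+3).choose (k+1) : ℚ)
      = (3*(k:ℚ)+3) * ((3*k+2).choose (k+1)) / (2*(k:ℚ)+2) := by
    rw [eq_div_iff d3]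
    have h := chooseR2 (3*k+2) (k+1)
    rw [show 3*k+2+1 = 3*k+3 by omega] at h
    push_cast at h
    linear_combination h
  have eb1 : ((2*k+1).choose (k+1) : ℚ) = (2*(k:ℚ)+1) * ((2*k).choose k) / ((k:ℚ)+1) := by
    rw [eq_div_iff d1]
    have h := chooseR3 (2*k) k
    push_cast at h
    linear_combination -h
  have eb2 : ((2*k+2).choose (k+1) : ℚ)
      = (2*(k:ℚ)+2) * ((2*k+1).choose (k+1)) / ((k:ℚ)+1) := by
    rw [eq_div_iff d1]
    have h := chooseR2 (2*k+1) (k+1)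
    rw [show 2*k+1+1 = 2*k+2 by omega] at h
    push_cast at h
    linear_combination h
  simp only [Fq, Gg, show 3*(k+1) = 3*k+3 by omega,
    show 2*(k+1) = 2*k+2 by omega, show n+2+(2*k+2) = n+4+2*k by omega]
  rw [ew, ev, eu, ec2, ec1, ea3, ea2, ea1, eb2, eb1]
  simp only [pow_succ]
  push_cast
  field_simp
  ring



def gQ (n : ℕ) : ℚ := ∑ k ∈ Finset.range (n+1), Fq n k

lemma Fq_zero {n k : ℕ} (h : n < k) : Fq n k = 0 := by
  rw [Fq, Nat.choose_eq_zero_of_lt (by omega)]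
  norm_num

lemma gQ_pad (m N : ℕ) (h : m+1 ≤ N) : gQ m = ∑ k ∈ Finset.range N, Fq m k := by
  rw [gQ]
  apply Finset.sum_subset (Finset.range_subset_range.2 h)
  intro x _ hx
  simp only [Finset.mem_range, not_lt] at hx
  exact Fq_zero (by omega)

lemma gQ_rec (n : ℕ) : ((n:ℚ)+2)^2 * gQ (n+2)
    = (7*(n:ℚ)^2+21*n+16) * gQ (n+1) + 8*((n:ℚ)+1)^2 * gQ n := by
  have key : ∑ k ∈ Finset.range (n+3),
      (((n:ℚ)+2)^2 * Fq (n+2) k - (7*(n:ℚ)^2+21*n+16) * Fq (n+1) k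
        - 8*((n:ℚ)+1)^2 * Fq n k) = 0 := by
    rw [Finset.sum_congr rfl (fun k _ => guo_step n k), Finset.sum_range_sub (Gg n)]
    have h0 : Gg n 0 = 0 := by simp [Gg]
    have h1 : Gg n (n+3) = 0 := by
      have : (n+2+2*(n+3)).choose (3*(n+3)) = 0 := Nat.choose_eq_zero_of_lt (by omega)
      simp [Gg, this]
    rw [h0, h1]
    ring
  rw [gQ_pad (n+2) (n+3) (by omega), gQ_pad (n+1) (n+3) (by omega), gQ_pad n (n+3) (by omega)]
  simp only [Finset.sum_sub_distrib, ← Finset.mul_sum] at key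
  linarith

lemma gQ_eq_fQ (n : ℕ) : gQ n = fQ n := by
  have H : ∀ m, gQ m = fQ m ∧ gQ (m+1) = fQ (m+1) := by
    intro m
    induction m with
    | zero =>
      constructor
      · simp [gQ, fQ, Fq, Finset.sum_range_succ]
      · rw [gQ, fQ]
        norm_num [Fq, Finset.sum_range_succ]
    | succ m ih =>
      refine ⟨ih.2, ?_⟩
      have h1 := fQ_rec m
      have h2 := gQ_rec m
      have hne : ((m:ℚ)+2)^2 ≠ 0 := by positivity
      have : ((m:ℚ)+2)^2 * gQ (m+2) = ((m:ℚ)+2)^2 * fQ (m+2) := by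
        rw [h1, h2, ih.1, ih.2]
      exact mul_left_cancel₀ hne this
  exact (H n).1



def tQ (n k : ℕ) : ℚ :=
  ((2 * n).choose n : ℚ) * ((n + 2 * k).choose (3 * k) : ℚ) *
    ((3 * k).choose k : ℚ) * ((2 * k).choose k : ℚ) * n * ((k : ℚ) - n) *
    (-4) ^ (n - k) / (8 * (2 * k + 1))

lemma key_s5 (n k : ℕ) (hk : k ≤ n) :
    tQ (n+1) k + 16 * tQ n k = (3*(n:ℚ)+1) * ((2*n).choose n : ℚ) * Fq n k := by
  obtain ⟨d, rfl⟩ : ∃ d, n = k + d := ⟨n - k, by omega⟩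
  have d1 : ((k:ℚ)+d+1) ≠ 0 := by positivity
  have d2 : ((d:ℚ)+1) ≠ 0 := by positivity
  have d3 : (2*(k:ℚ)+1) ≠ 0 := by positivity
  have d4 : ((-4:ℚ))^k ≠ 0 := pow_ne_zero _ (by norm_num)
  have em1 : ((2*(k+d)+1).choose (k+d+1) : ℚ)
      = (2*((k:ℚ)+d)+1) * ((2*(k+d)).choose (k+d)) / ((k:ℚ)+d+1) := by
    rw [eq_div_iff d1]
    have h := chooseR3 (2*(k+d)) (k+d)
    push_cast at h
    linear_combination -h
  have em2 : ((2*(k+d)+2).choose (k+d+1) : ℚ)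
      = (2*((k:ℚ)+d)+2) * ((2*(k+d)+1).choose (k+d+1)) / ((k:ℚ)+d+1) := by
    rw [eq_div_iff d1]
    have h := chooseR2 (2*(k+d)+1) (k+d+1)
    rw [show 2*(k+d)+1+1 = 2*(k+d)+2 by omega] at h
    push_cast at h
    linear_combination h
  have ew1 : ((k+d+1+2*k).choose (3*k) : ℚ)
      = ((k:ℚ)+d+1+2*k) * ((k+d+2*k).choose (3*k)) / ((d:ℚ)+1) := by
    rw [eq_div_iff d2]
    have h := chooseR2 (k+d+2*k) (3*k)
    rw [show k+d+2*k+1 = k+d+1+2*k by omega] at h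
    push_cast at h
    linear_combination h
  rw [tQ, tQ, Fq]
  rw [show k+d+1-k = d+1 by omega, show k+d-k = d by omega,
    show 2*(k+d+1) = 2*(k+d)+2 by omega, show (k+d+1)+2*k = k+d+1+2*k by omega,
    show (k+d)+2*k = k+d+2*k by omega]
  rw [em2, em1, ew1]
  simp only [pow_succ, pow_add]
  push_cast
  field_simp
  ring


lemma main_id (n : ℕ) :
    ∑ m ∈ Finset.range n,
        (3 * m + 1 : ℚ) * (-16) ^ (n - m - 1) * ((2 * m).choose m : ℚ) * (franel m : ℚ)
      = ∑ k ∈ Finset.range n, tQ n k := by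
  induction n with
  | zero => simp
  | succ n ih =>
    have hfr : ((franel n : ℚ)) = gQ n := by
      rw [gQ_eq_fQ, franel, fQ]
      push_cast
      rfl
    have htnn : tQ n n = 0 := by simp [tQ]
    have hR : ∑ k ∈ Finset.range (n+1), tQ (n+1) k
        = (3*(n:ℚ)+1) * ((2*n).choose n : ℚ) * gQ n - 16 * ∑ k ∈ Finset.range n, tQ n k := by
      have hcong : ∀ k ∈ Finset.range (n+1), tQ (n+1) k
          = (3*(n:ℚ)+1) * ((2*n).choose n : ℚ) * Fq n k - 16 * tQ n k := by
        intro k hk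
        have h := key_s5 n k (Nat.lt_succ_iff.mp (Finset.mem_range.mp hk))
        linarith
      rw [Finset.sum_congr rfl hcong, Finset.sum_sub_distrib, ← Finset.mul_sum, ← Finset.mul_sum,
        ← gQ, Finset.sum_range_succ, htnn]
      ring
    have hL : ∑ m ∈ Finset.range n,
          (3 * m + 1 : ℚ) * (-16) ^ (n + 1 - m - 1) * ((2 * m).choose m : ℚ) * (franel m : ℚ)
        = (-16) * ∑ m ∈ Finset.range n,
          (3 * m + 1 : ℚ) * (-16) ^ (n - m - 1) * ((2 * m).choose m : ℚ) * (franel m : ℚ) := by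
      rw [Finset.mul_sum]
      apply Finset.sum_congr rfl
      intro m hm
      have hm' := Finset.mem_range.mp hm
      rw [show n + 1 - m - 1 = (n - m - 1) + 1 by omega, pow_succ]
      ring
    rw [Finset.sum_range_succ, hL, ih, hR, hfr, show n + 1 - n - 1 = 0 by omega]
    simp only [pow_zero]
    ring

theorem stmt_5 (n : ℕ) (hn : 0 < n) :
    ∑ m ∈ Finset.range n,
        (3 * m + 1 : ℚ) * (-16) ^ (n - m - 1) * ((2 * m).choose m : ℚ) * (franel m : ℚ)
      = ∑ k ∈ Finset.range n,
          ((2 * n).choose n : ℚ) * ((n + 2 * k).choose (3 * k) : ℚ) *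
            ((3 * k).choose k : ℚ) * ((2 * k).choose k : ℚ) * n * ((k : ℚ) - n) *
            (-4) ^ (n - k) / (8 * (2 * k + 1)) := by
  exact main_id n
end

section
/- For every nonnegative integer k, C(3k,k) = (2k+1)·(C(3k,k) − 2·C(3k,k−1)), where C(3k,k−1) is interpreted as 0 when k = 0; in particular, 2k+1 divides C(3k,k). -/
theorem stmt_6 (k : ℕ) :
    (((3 * k).choose k : ℤ) =
        (2 * k + 1) *
          (((3 * k).choose k : ℤ) -
            2 * (if k = 0 then 0 else ((3 * k).choose (k - 1) : ℤ)))) ∧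
      (2 * k + 1 : ℤ) ∣ ((3 * k).choose k : ℤ) := by
  have key : ((3 * k).choose k : ℤ) =
      (2 * k + 1) *
        (((3 * k).choose k : ℤ) -
          2 * (if k = 0 then 0 else ((3 * k).choose (k - 1) : ℤ))) := by
    cases k with
    | zero => simp
    | succ n =>
      simp only [Nat.succ_ne_zero, if_false, Nat.succ_sub_one]
      have h := Nat.choose_succ_right_eq (3 * (n + 1)) n
      have h3 : 3 * (n + 1) - n = 2 * n + 3 := by omega
      rw [h3] at h
      have h' : (((3 * (n + 1)).choose (n + 1) : ℤ)) * (n + 1) =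
          ((3 * (n + 1)).choose n : ℤ) * (2 * n + 3) := by
        exact_mod_cast congrArg (Nat.cast : ℕ → ℤ) h
      push_cast
      linarith
  exact ⟨key, ⟨_, key⟩⟩
end

section
/- Let n and k be nonnegative integers with k ≤ n. Then ∑_{m=k}^{n} C(n,m)·C(m+2k,3k)·(-1)^{m-k} = C(2k,n-k)·(-1)^{n-k}, where C(2k,n-k) is interpreted as 0 when n-k > 2k. -/
open Finset

private lemma f_step (b n a : ℕ) :
    ∑ m ∈ range (n + 2), (-1 : ℤ) ^ m * ((n+1).choose m) * ((a + m).choose b)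
      = (∑ m ∈ range (n + 1), (-1 : ℤ) ^ m * (n.choose m) * ((a + m).choose b))
        - ∑ m ∈ range (n + 1), (-1 : ℤ) ^ m * (n.choose m) * ((a + 1 + m).choose b) := by
  have tail : ∑ j ∈ range (n + 1), (-1 : ℤ) ^ (j+1) * (n.choose (j+1)) * ((a + (j+1)).choose b)
      = (∑ m ∈ range (n + 1), (-1 : ℤ) ^ m * (n.choose m) * ((a + m).choose b))
        - (a.choose b : ℤ) := by
    rw [Finset.sum_range_succ]
    rw [Finset.sum_range_succ' (fun m => (-1 : ℤ) ^ m * (n.choose m) * ((a + m).choose b)) n]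
    simp [Nat.choose_succ_self]
  rw [Finset.sum_range_succ'
    (fun m => (-1 : ℤ) ^ m * ((n+1).choose m) * ((a + m).choose b)) (n+1)]
  have expand : ∀ j ∈ range (n+1),
      (-1 : ℤ) ^ (j+1) * (((n+1).choose (j+1) : ℕ) : ℤ) * ((a + (j+1)).choose b)
        = -((-1 : ℤ) ^ j * (n.choose j) * ((a + 1 + j).choose b))
          + (-1 : ℤ) ^ (j+1) * (n.choose (j+1)) * ((a + (j+1)).choose b) := by
    intro j _
    have : (n+1).choose (j+1) = n.choose j + n.choose (j+1) := Nat.choose_succ_succ n j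
    rw [this]
    have hax : a + (j + 1) = a + 1 + j := by ring
    rw [hax]
    push_cast
    ring
  rw [Finset.sum_congr rfl expand, Finset.sum_add_distrib, Finset.sum_neg_distrib, tail]
  simp
  ring

private lemma f_val (b : ℕ) : ∀ n a : ℕ,
    ∑ m ∈ range (n + 1), (-1 : ℤ) ^ m * (n.choose m) * ((a + m).choose b)
      = (-1) ^ n * (if n ≤ b then ((a.choose (b - n) : ℕ) : ℤ) else 0) := by
  intro n
  induction n with
  | zero => intro a; simp
  | succ n ih =>
    intro a
    rw [show n + 1 + 1 = n + 2 by rfl, f_step, ih a, ih (a+1)]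
    by_cases h : n + 1 ≤ b
    · have hb : b - n = (b - (n+1)) + 1 := by omega
      have h2 : n ≤ b := by omega
      rw [if_pos h, if_pos h2, if_pos h2, hb, Nat.choose_succ_succ]
      push_cast
      ring
    · by_cases h2 : n ≤ b
      · have : b = n := by omega
        subst this
        simp [h]
      · simp [h, h2]

theorem stmt_7 (n k : ℕ) (hkn : k ≤ n) :
    ∑ m ∈ Finset.Icc k n,
        (n.choose m : ℤ) * ((m + 2 * k).choose (3 * k) : ℤ) * (-1) ^ (m - k)
      = ((2 * k).choose (n - k) : ℤ) * (-1) ^ (n - k) := by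
  have key := f_val (3 * k) n (2 * k)
  have hsub : Finset.Icc k n ⊆ range (n + 1) := by
    intro m hm
    simp only [Finset.mem_Icc] at hm
    simp [Finset.mem_range]; omega
  have hL : ∑ m ∈ Finset.Icc k n,
        (n.choose m : ℤ) * ((m + 2 * k).choose (3 * k) : ℤ) * (-1) ^ (m - k)
      = (-1) ^ k * ∑ m ∈ range (n + 1),
          (-1 : ℤ) ^ m * (n.choose m) * ((2 * k + m).choose (3 * k)) := by
    rw [Finset.mul_sum, ← Finset.sum_subset hsub]
    · apply Finset.sum_congr rfl
      intro m hm
      simp only [Finset.mem_Icc] at hm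
      have hsq : ((-1 : ℤ)) ^ k * (-1) ^ k = 1 := by
        rw [← pow_add, ← two_mul, pow_mul]; norm_num
      have hpm : (-1 : ℤ) ^ m = (-1) ^ (m - k) * (-1) ^ k := by
        rw [← pow_add]; congr 1; omega
      have : (-1 : ℤ) ^ (m - k) = (-1) ^ k * (-1) ^ m := by
        rw [hpm]; linear_combination (-(-1 : ℤ) ^ (m - k)) * hsq
      rw [this, show 2 * k + m = m + 2 * k by ring]
      ring
    · intro m hm hm2
      simp only [Finset.mem_Icc, not_and, not_le] at hm2
      simp only [Finset.mem_range] at hm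
      have hmk : m < k := by
        by_contra hc
        push_neg at hc
        exact absurd (hm2 hc) (by omega)
      have : (2 * k + m).choose (3 * k) = 0 := Nat.choose_eq_zero_of_lt (by omega)
      simp [this]
  rw [hL, key]
  have hsq : ((-1 : ℤ)) ^ k * (-1) ^ k = 1 := by
    rw [← pow_add, ← two_mul, pow_mul]; norm_num
  have hpn : (-1 : ℤ) ^ n = (-1) ^ (n - k) * (-1) ^ k := by
    rw [← pow_add]; congr 1; omega
  have hnk : (-1 : ℤ) ^ (n - k) = (-1) ^ k * (-1) ^ n := by
    rw [hpn]; linear_combination (-(-1 : ℤ) ^ (n - k)) * hsq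
  by_cases h : n ≤ 3 * k
  · rw [if_pos h]
    have hsym : (2 * k).choose (3 * k - n) = (2 * k).choose (n - k) := by
      have h1 : 3 * k - n ≤ 2 * k := by omega
      have h3 := Nat.choose_symm h1
      rw [show 2 * k - (3 * k - n) = n - k by omega] at h3
      exact h3.symm
    rw [hsym, hnk]
    ring
  · rw [if_neg h]
    have : (2 * k).choose (n - k) = 0 := Nat.choose_eq_zero_of_lt (by omega)
    simp [this]
end

section
/- Let p be an odd prime and let k be an integer with 1 ≤ k < (p-1)/2. Then k·C(p+2k,3k)·C(3k,k) ≡ (-1)^{k-1}·p (mod p²). -/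
lemma aux_choose_sub_one (p : ℕ) (hp : p.Prime) :
    ∀ j, j < p → ((p - 1).choose j : ℤ) ≡ (-1) ^ j [ZMOD (p : ℕ)] := by
  intro j
  induction j with
  | zero => simp [Int.ModEq.refl]
  | succ j ih =>
    intro hj
    have hp2 := hp.two_le
    have hps : p - 1 + 1 = p := by omega
    have pascal : (p - 1).choose j + (p - 1).choose (j + 1) = p.choose (j + 1) := by
      conv_rhs => rw [← hps]
      exact (Nat.choose_succ_succ (p - 1) j).symm
    have hdvd : ((p.choose (j + 1) : ℤ)) ≡ 0 [ZMOD (p : ℕ)] := by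
      rw [Int.ModEq]
      simp [Int.emod_emod_of_dvd, Int.emod_eq_zero_of_dvd,
        Int.natCast_dvd_natCast.mpr (Nat.Prime.dvd_choose_self hp (by omega) hj)]
    have heq : ((p - 1).choose (j + 1) : ℤ) =
        (p.choose (j + 1) : ℤ) - ((p - 1).choose j : ℤ) := by
      have := congrArg (fun n : ℕ => (n : ℤ)) pascal
      push_cast at this
      linarith
    rw [heq]
    calc (p.choose (j + 1) : ℤ) - ((p - 1).choose j : ℤ)
        ≡ 0 - (-1) ^ j [ZMOD (p : ℕ)] := Int.ModEq.sub hdvd (ih (by omega))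
      _ = (-1) ^ (j + 1) := by ring

theorem stmt_8 (p : ℕ) (hp : p.Prime) (hodd : Odd p) (k : ℕ)
    (hk1 : 1 ≤ k) (hk2 : k < (p - 1) / 2) :
    ((k : ℤ) * ((p + 2 * k).choose (3 * k) : ℤ) * ((3 * k).choose k : ℤ))
      ≡ (-1) ^ (k - 1) * p [ZMOD (p ^ 2 : ℕ)] := by
  haveI := Fact.mk hp
  obtain ⟨m, hm⟩ := hodd
  have hp2 := hp.two_le
  have h2k : 2 * k < p - 1 := by omega
  -- Step 1: nat identity  C(p+2k,3k)*C(3k,k) = C(p+2k,2k)*C(p,k)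
  have h1 : (p + 2 * k).choose (3 * k) * (3 * k).choose k
      = (p + 2 * k).choose (2 * k) * p.choose k := by
    have hs : (3 * k).choose k = (3 * k).choose (2 * k) := by
      rw [← Nat.choose_symm (show 2 * k ≤ 3 * k by omega)]
      congr 1; omega
    rw [hs]
    have := Nat.choose_mul (n := p + 2 * k) (k := 3 * k) (s := 2 * k)
      (by omega)
    rw [this]
    congr 1 <;> congr 1 <;> omega
  -- Step 2: k * C(p,k) = p * C(p-1,k-1)
  have h2 : k * p.choose k = p * (p - 1).choose (k - 1) := by
    have := Nat.add_one_mul_choose_eq (p - 1) (k - 1)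
    rw [show p - 1 + 1 = p by omega,
      show k - 1 + 1 = k by omega] at this
    rw [mul_comm]; exact this.symm
  -- Step 3: full nat identity
  have h3 : k * ((p + 2 * k).choose (3 * k) * (3 * k).choose k)
      = p * ((p - 1).choose (k - 1) * (p + 2 * k).choose (2 * k)) := by
    rw [h1, show k * ((p + 2 * k).choose (2 * k) * p.choose k)
      = (k * p.choose k) * (p + 2 * k).choose (2 * k) by ring, h2]
    ring
  -- Step 4: Lucas: C(p+2k,2k) ≡ 1 mod p
  have h4 : (((p + 2 * k).choose (2 * k) : ℤ)) ≡ 1 [ZMOD (p : ℕ)] := by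
    have hl := Choose.choose_modEq_choose_mod_mul_choose_div
      (p := p) (n := p + 2 * k) (k := 2 * k)
    have e1 : (p + 2 * k) % p = 2 * k := by
      rw [Nat.add_mod_left, Nat.mod_eq_of_lt (by omega)]
    have e2 : (p + 2 * k) / p = 1 := by
      rw [Nat.add_div_left _ (by omega), Nat.div_eq_of_lt (by omega)]
    have e3 : 2 * k % p = 2 * k := Nat.mod_eq_of_lt (by omega)
    have e4 : 2 * k / p = 0 := Nat.div_eq_of_lt (by omega)
    rw [e1, e2, e3, e4] at hl
    simpa using hl
  -- Step 5: mod p congruence of the parenthesis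
  have h5 : (((p - 1).choose (k - 1) : ℤ) * ((p + 2 * k).choose (2 * k) : ℤ))
      ≡ (-1) ^ (k - 1) [ZMOD (p : ℕ)] := by
    have := (aux_choose_sub_one p hp (k - 1) (by omega)).mul h4
    simpa using this
  -- Step 6: conclude
  have hcast : ((k : ℤ) * ((p + 2 * k).choose (3 * k) : ℤ) * ((3 * k).choose k : ℤ))
      = (p : ℤ) * (((p - 1).choose (k - 1) : ℤ) * ((p + 2 * k).choose (2 * k) : ℤ)) := by
    have := congrArg (fun n : ℕ => (n : ℤ)) h3
    push_cast at this
    linarith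
  rw [hcast]
  have hdvd : ((p : ℤ)) ∣ ((-1) ^ (k - 1)
      - ((p - 1).choose (k - 1) : ℤ) * ((p + 2 * k).choose (2 * k) : ℤ)) :=
    Int.ModEq.dvd h5
  obtain ⟨c, hc⟩ := hdvd
  show _ ≡ _ [ZMOD ((p ^ 2 : ℕ) : ℤ)]
  rw [Int.modEq_iff_dvd]
  push_cast
  have : (-1) ^ (k - 1) * (p : ℤ)
      - (p : ℤ) * (((p - 1).choose (k - 1) : ℤ) * ((p + 2 * k).choose (2 * k) : ℤ))
      = (p : ℤ) ^ 2 * c := by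
    rw [show (p:ℤ)^2 * c = (p:ℤ) * ((p:ℤ)*c) by ring, ← hc]; ring
  rw [this]
  exact Dvd.intro _ rfl
end

section
/- Let p be an odd prime and let k be an integer with (p+1)/2 ≤ k < p. Then k·C(p+2k,3k)·C(3k,k) ≡ (-1)^{k-1}·2p (mod p²). -/
lemma fac_add (n : ℕ) : ∀ m : ℕ,
    (n + m).factorial = n.factorial * ∏ j ∈ Finset.range m, (n + 1 + j)
  | 0 => by simp
  | (m + 1) => by
      rw [Finset.prod_range_succ, ← mul_assoc, ← fac_add n m,
        show n + (m + 1) = (n + m) + 1 from rfl, Nat.factorial_succ]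
      ring

theorem stmt_9 (p : ℕ) (hp : p.Prime) (hodd : Odd p) (k : ℕ)
    (hk1 : (p + 1) / 2 ≤ k) (hk2 : k < p) :
    ((k : ℤ) * ((p + 2 * k).choose (3 * k) : ℤ) * ((3 * k).choose k : ℤ))
      ≡ (-1) ^ (k - 1) * (2 * p) [ZMOD (p ^ 2 : ℕ)] := by
  obtain ⟨t, ht⟩ := hodd
  have hp2 : 2 ≤ p := hp.two_le
  have hpk : p < 2 * k := by omega
  have hk0 : 0 < k := by omega
  -- choose identities
  have c1 : (p + 2*k).choose (3*k) * (3*k).factorial * (p - k).factorial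
      = (p + 2*k).factorial := by
    have h := Nat.choose_mul_factorial_mul_factorial (show 3*k ≤ p + 2*k by omega)
    rwa [show p + 2*k - 3*k = p - k by omega] at h
  have c2 : (3*k).choose k * k.factorial * (2*k).factorial = (3*k).factorial := by
    have h := Nat.choose_mul_factorial_mul_factorial (show k ≤ 3*k by omega)
    rwa [show 3*k - k = 2*k by omega] at h
  -- factorial decompositions
  have f2k : (2*k).factorial
      = p.factorial * ∏ j ∈ Finset.range (2*k - p), (p + 1 + j) := by
    have h := fac_add p (2*k - p)
    rwa [show p + (2*k - p) = 2*k by omega] at h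
  have h2a : ∏ j ∈ Finset.range (p - 1 + 1), (p + 1 + j)
      = (∏ j ∈ Finset.range (p - 1), (p + 1 + j)) * (p + 1 + (p - 1)) :=
    Finset.prod_range_succ _ _
  rw [show p - 1 + 1 = p by omega, show p + 1 + (p - 1) = 2*p by omega] at h2a
  have f2p : (2*p).factorial
      = p.factorial * (∏ j ∈ Finset.range (p - 1), (p + 1 + j)) * (2*p) := by
    have h := fac_add p p
    rw [show p + p = 2*p by ring] at h
    rw [h, h2a, mul_assoc]
  have f3 : (p + 2*k).factorial
      = p.factorial * (∏ j ∈ Finset.range (p - 1), (p + 1 + j)) * (2*p)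
        * ∏ j ∈ Finset.range (2*k - p), (2*p + 1 + j) := by
    have h := fac_add (2*p) (2*k - p)
    rw [show 2*p + (2*k - p) = p + 2*k by omega] at h
    rw [h, f2p]
  -- key exact identity
  have keyN : k * ((p + 2*k).choose (3*k)) * ((3*k).choose k)
      * (k.factorial * (∏ j ∈ Finset.range (2*k - p), (p + 1 + j)) * (p - k).factorial)
      = 2*p*k*((∏ j ∈ Finset.range (p - 1), (p + 1 + j))
        * ∏ j ∈ Finset.range (2*k - p), (2*p + 1 + j)) := by
    apply Nat.eq_of_mul_eq_mul_left (Nat.factorial_pos p)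
    calc p.factorial * (k * ((p + 2*k).choose (3*k)) * ((3*k).choose k)
          * (k.factorial * (∏ j ∈ Finset.range (2*k - p), (p + 1 + j)) * (p - k).factorial))
        = k * ((p + 2*k).choose (3*k))
            * ((3*k).choose k * k.factorial * (2*k).factorial) * (p - k).factorial := by
          rw [f2k]; ring
      _ = k * ((p + 2*k).choose (3*k) * (3*k).factorial * (p - k).factorial) := by
          rw [c2]; ring
      _ = k * (p + 2*k).factorial := by rw [c1]
      _ = p.factorial * (2*p*k*((∏ j ∈ Finset.range (p - 1), (p + 1 + j))
            * ∏ j ∈ Finset.range (2*k - p), (2*p + 1 + j))) := by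
          rw [f3]; ring
  have keyZ : ((k:ℤ) * ((p + 2*k).choose (3*k) : ℤ) * ((3*k).choose k : ℤ))
      * ((k.factorial * (∏ j ∈ Finset.range (2*k - p), (p + 1 + j)) * (p - k).factorial : ℕ) : ℤ)
      = 2 * (p:ℤ) * (k:ℤ) * (((∏ j ∈ Finset.range (p - 1), (p + 1 + j) : ℕ) : ℤ)
        * ((∏ j ∈ Finset.range (2*k - p), (2*p + 1 + j) : ℕ) : ℤ)) := by
    exact_mod_cast keyN
  -- mod p facts (in ZMod p)
  have helper : ∀ n : ℕ, (∏ j ∈ Finset.range n, (1 + (j : ZMod p))) = (n.factorial : ZMod p) := by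
    intro n
    rw [← Finset.prod_range_add_one_eq_factorial n, Nat.cast_prod]
    exact Finset.prod_congr rfl (fun j _ => by push_cast; ring)
  have hfac1 : (p - 1).factorial
      = (p - k).factorial * ∏ j ∈ Finset.range (k - 1), (p - k + 1 + j) := by
    have h := fac_add (p - k) (k - 1)
    rwa [show p - k + (k - 1) = p - 1 by omega] at h
  have h6 : ∀ j ∈ Finset.range (k - 1),
      ((p - k + 1 + j : ℕ) : ZMod p) = -((k - 1 - j : ℕ) : ZMod p) := by
    intro j hj
    rw [Finset.mem_range] at hj
    have hsum : ((p - k + 1 + j : ℕ) : ZMod p) + ((k - 1 - j : ℕ) : ZMod p) = 0 := by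
      rw [← Nat.cast_add, show p - k + 1 + j + (k - 1 - j) = p by omega, ZMod.natCast_self]
    exact eq_neg_of_add_eq_zero_left hsum
  have h7 : (∏ j ∈ Finset.range (k - 1), ((p - k + 1 + j : ℕ) : ZMod p))
      = (-1)^(k - 1) * ((k - 1).factorial : ZMod p) := by
    rw [Finset.prod_congr rfl h6]
    have hneg : (∏ j ∈ Finset.range (k - 1), (-((k - 1 - j : ℕ) : ZMod p)))
        = (∏ j ∈ Finset.range (k - 1), ((-1 : ZMod p) * ((k - 1 - j : ℕ) : ZMod p))) :=
      Finset.prod_congr rfl (fun j _ => (neg_one_mul _).symm)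
    rw [hneg, Finset.prod_mul_distrib, Finset.prod_const, Finset.card_range]
    congr 1
    calc ∏ j ∈ Finset.range (k - 1), ((k - 1 - j : ℕ) : ZMod p)
        = ∏ j ∈ Finset.range (k - 1), (fun i => ((i + 1 : ℕ) : ZMod p)) ((k - 1) - 1 - j) :=
          Finset.prod_congr rfl (fun j hj => by
            rw [Finset.mem_range] at hj
            show ((k - 1 - j : ℕ) : ZMod p) = ((k - 1 - 1 - j + 1 : ℕ) : ZMod p)
            congr 1
            omega)
      _ = ∏ j ∈ Finset.range (k - 1), ((j + 1 : ℕ) : ZMod p) := by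
          exact Finset.prod_range_reflect (fun i => ((i + 1 : ℕ) : ZMod p)) (k - 1)
      _ = ((k - 1).factorial : ZMod p) := by
          rw [← Nat.cast_prod, Finset.prod_range_add_one_eq_factorial]
  have hW : ((p - 1).factorial : ZMod p) * (k : ZMod p)
      = (-1)^(k - 1) * (k.factorial : ZMod p) * ((p - k).factorial : ZMod p) := by
    have h5 : ((p - 1).factorial : ZMod p)
        = ((p - k).factorial : ZMod p) * ∏ j ∈ Finset.range (k - 1), ((p - k + 1 + j : ℕ) : ZMod p) := by
      rw [hfac1, Nat.cast_mul, Nat.cast_prod]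
    rw [h5, h7]
    have hk' : (k : ZMod p) * ((k - 1).factorial : ZMod p) = (k.factorial : ZMod p) := by
      rw [← Nat.cast_mul, Nat.mul_factorial_pred hk0.ne']
    linear_combination ((-1 : ZMod p))^(k - 1) * ((p - k).factorial : ZMod p) * hk'
  have hq : ((k * (∏ j ∈ Finset.range (p - 1), (p + 1 + j))
        * ∏ j ∈ Finset.range (2*k - p), (2*p + 1 + j) : ℕ) : ℤ)
      ≡ (-1)^(k - 1)
        * ((k.factorial * (∏ j ∈ Finset.range (2*k - p), (p + 1 + j)) * (p - k).factorial : ℕ) : ℤ)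
        [ZMOD (p : ℕ)] := by
    apply (ZMod.intCast_eq_intCast_iff _ _ p).mp
    push_cast
    simp only [ZMod.natCast_self, mul_zero, zero_add]
    simp only [helper]
    linear_combination (((2*k - p).factorial : ZMod p)) * hW
  -- assemble mod p^2 congruence
  have h2' : ((k:ℤ) * ((p + 2*k).choose (3*k) : ℤ) * ((3*k).choose k : ℤ))
      * ((k.factorial * (∏ j ∈ Finset.range (2*k - p), (p + 1 + j)) * (p - k).factorial : ℕ) : ℤ)
      ≡ ((-1)^(k - 1) * (2 * (p:ℤ)))
      * ((k.factorial * (∏ j ∈ Finset.range (2*k - p), (p + 1 + j)) * (p - k).factorial : ℕ) : ℤ)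
      [ZMOD ((p^2 : ℕ) : ℤ)] := by
    refine Int.modEq_iff_dvd.mpr ?_
    obtain ⟨c, hc⟩ := Int.ModEq.dvd hq
    refine ⟨2 * c, ?_⟩
    push_cast at hc keyZ ⊢
    linear_combination 2 * (p:ℤ) * hc - keyZ
  -- coprimality and cancellation
  have hM : ¬ p ∣ (k.factorial * (∏ j ∈ Finset.range (2*k - p), (p + 1 + j)) * (p - k).factorial) := by
    intro hd
    rcases (Nat.Prime.dvd_mul hp).mp hd with h | h
    · rcases (Nat.Prime.dvd_mul hp).mp h with h' | h'
      · exact absurd ((Nat.Prime.dvd_factorial hp).mp h') (by omega)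
      · obtain ⟨j, hj, hdj⟩ := ((Nat.Prime.prime hp).dvd_finset_prod_iff _).mp h'
        rw [Finset.mem_range] at hj
        rw [show p + 1 + j = p + (1 + j) by ring] at hdj
        have h1j : p ∣ 1 + j := (Nat.dvd_add_right (dvd_refl p)).mp hdj
        have := Nat.le_of_dvd (by omega) h1j
        omega
    · exact absurd ((Nat.Prime.dvd_factorial hp).mp h) (by omega)
  have hcop : Nat.Coprime p
      (k.factorial * (∏ j ∈ Finset.range (2*k - p), (p + 1 + j)) * (p - k).factorial) :=
    (Nat.Prime.coprime_iff_not_dvd hp).mpr hM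
  have hgcd : Int.gcd ((p^2 : ℕ) : ℤ)
      ((k.factorial * (∏ j ∈ Finset.range (2*k - p), (p + 1 + j)) * (p - k).factorial : ℕ) : ℤ) = 1 := by
    rw [Int.gcd_natCast_natCast]
    exact Nat.Coprime.pow_left 2 hcop
  have hfin := Int.ModEq.cancel_right_div_gcd
    (show (0:ℤ) < ((p^2 : ℕ) : ℤ) by exact_mod_cast pow_pos hp.pos 2) h2'
  rw [hgcd] at hfin
  simpa using hfin
end

section
/- Let p be an odd prime and set k = (p-1)/2. Then C(p+2k,3k)·C(3k,k)·C(2k,k)·(k-p) = −p·C(2p-1,p-1)·C(p-1,(p-1)/2)², and consequently C(p+2k,3k)·C(3k,k)·C(2k,k)·(k-p) ≡ −p·16^{p-1} (mod p³). -/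
open Finset Nat

/-- Expansion of a product `∏ (c + f i)` modulo `c ^ 2 = 0`. -/
lemma prod_add_of_sq_eq_zero {R : Type*} [CommRing R] (c : R) (hc : c * c = 0)
    (s : Finset ℕ) (f : ℕ → R) :
    ∏ i ∈ s, (c + f i) =
      (∏ i ∈ s, f i) + c * ∑ i ∈ s, ∏ j ∈ s.erase i, f j := by
  classical
  induction s using Finset.induction_on with
  | empty => simp
  | @insert a s ha ih =>
    rw [Finset.prod_insert ha, ih, Finset.prod_insert ha, Finset.sum_insert ha,
      Finset.erase_insert ha]
    have h2 : ∀ i ∈ s, ∏ j ∈ (insert a s).erase i, f j = f a * ∏ j ∈ s.erase i, f j := by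
      intro i hi
      have hai : a ≠ i := by rintro rfl; exact ha hi
      rw [Finset.erase_insert_of_ne hai,
        Finset.prod_insert (fun h => ha (Finset.mem_of_mem_erase h))]
    rw [Finset.sum_congr rfl h2, Finset.mul_sum]
    simp only [← Finset.mul_sum]
    linear_combination (∑ i ∈ s, ∏ j ∈ s.erase i, f j) * hc

/-- `∏_{i ∈ Icc 1 k} i = k!` -/
lemma prod_Icc_id_eq_factorial (k : ℕ) : ∏ i ∈ Icc 1 k, i = k ! := by
  induction k with
  | zero => simp
  | succ n ih =>
    rw [Finset.prod_Icc_succ_top (Nat.le_add_left 1 n), ih, Nat.factorial_succ, mul_comm]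

/-- `(2k)! = 2^k · k! · ∏_{j ∈ Icc 1 k} (2j - 1)` -/
lemma two_k_factorial (k : ℕ) :
    (2 * k)! = 2 ^ k * k ! * ∏ j ∈ Icc 1 k, (2 * j - 1) := by
  induction k with
  | zero => simp
  | succ n ih =>
    have h1 : 2 * (n + 1) = 2 * n + 1 + 1 := by ring
    rw [Finset.prod_Icc_succ_top (Nat.le_add_left 1 n), h1,
      show 2 * n + 1 + 1 - 1 = 2 * n + 1 by omega,
      Nat.factorial_succ (2 * n + 1), Nat.factorial_succ (2 * n),
      Nat.factorial_succ n, ih]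
    ring

/-- `(m+n)! = m! * ∏_{j ∈ Icc 1 n} (m+j)` -/
lemma fact_add_prod (m n : ℕ) : (m + n)! = m ! * ∏ j ∈ Icc 1 n, (m + j) := by
  induction n with
  | zero => simp
  | succ n ih =>
    rw [Finset.prod_Icc_succ_top (Nat.le_add_left 1 n), show m + (n+1) = (m+n)+1 by ring,
      Nat.factorial_succ, ih]
    ring

/-- Sum of inverses of `1..p-1` vanishes mod `p` for odd `p`. -/
lemma sum_inv_eq_zero (p : ℕ) (hp : p.Prime) (hodd : Odd p) :
    ∑ i ∈ Icc 1 (p - 1), ((i : ZMod p))⁻¹ = 0 := by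
  haveI := Fact.mk hp
  apply Finset.sum_involution (fun i _ => p - i)
  · intro a ha
    simp only [Finset.mem_Icc] at ha
    have h1 : ((p - a : ℕ) : ZMod p) = -(a : ZMod p) := by
      have : (p : ZMod p) = 0 := ZMod.natCast_self p
      rw [Nat.cast_sub (by omega)]
      rw [this]; ring
    rw [h1, inv_neg]
    ring
  · intro a ha _
    simp only [Finset.mem_Icc] at ha
    obtain ⟨m, hm⟩ := hodd
    intro hcon
    omega
  · intro a ha
    simp only [Finset.mem_Icc] at ha ⊢
    omega
  · intro a ha
    simp only [Finset.mem_Icc] at ha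
    omega

/-- `C(p-1, i) ≡ (-1)^i mod p`. -/
lemma choose_sub_one (p : ℕ) (hp : p.Prime) (i : ℕ) (h : i ≤ p - 1) :
    (((p - 1).choose i : ℕ) : ZMod p) = (-1) ^ i := by
  have hp2 := hp.two_le
  induction i with
  | zero => simp
  | succ n ih =>
    have pas : (p - 1).choose n + (p - 1).choose (n + 1) = p.choose (n + 1) := by
      rw [show p = (p-1)+1 by omega, Nat.choose_succ_succ]
      congr 1 <;> congr 1 <;> omega
    have hdvd : p ∣ p.choose (n + 1) := Nat.Prime.dvd_choose_self hp (by omega) (by omega)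
    have hz : ((p.choose (n + 1) : ℕ) : ZMod p) = 0 :=
      (ZMod.natCast_eq_zero_iff _ _).mpr hdvd
    have ihn := ih (by omega)
    have : (((p - 1).choose n : ℕ) : ZMod p) + (((p - 1).choose (n+1) : ℕ) : ZMod p) = 0 := by
      rw [← Nat.cast_add, pas, hz]
    rw [pow_succ]
    rw [ihn] at this
    linear_combination this

/-- If two elements of `ZMod p^2` agree after reduction mod `p`, then they agree
after multiplication by `p`. -/
lemma pmul_cancel (p : ℕ) (hp : p.Prime) (x y : ZMod (p ^ 2))
    (h : ZMod.castHom (dvd_pow_self p two_ne_zero) (ZMod p) x =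
         ZMod.castHom (dvd_pow_self p two_ne_zero) (ZMod p) y) :
    (p : ZMod (p ^ 2)) * x = (p : ZMod (p ^ 2)) * y := by
  haveI : NeZero (p ^ 2) := ⟨pow_ne_zero 2 hp.pos.ne'⟩
  have hd : ZMod.castHom (dvd_pow_self p two_ne_zero) (ZMod p) (x - y) = 0 := by
    rw [map_sub, h, sub_self]
  have hdv : (((x - y).val : ℕ) : ZMod p) = 0 := by
    rw [ZMod.natCast_val, ← ZMod.castHom_apply (h := dvd_pow_self p two_ne_zero), hd]
  obtain ⟨m, hm⟩ := (ZMod.natCast_eq_zero_iff _ _).mp hdv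
  have hps : ((p ^ 2 : ℕ) : ZMod (p ^ 2)) = 0 := ZMod.natCast_self _
  have hz : (p : ZMod (p ^ 2)) * (x - y) = 0 := by
    rw [← ZMod.natCast_zmod_val (x - y), hm]
    push_cast
    push_cast at hps
    linear_combination (m : ZMod (p^2)) * hps
  linear_combination hz

set_option maxRecDepth 8000 in
lemma key_cong (p k : ℕ) (hp : p.Prime) (hpk : p = 2 * k + 1) (hk1 : 1 ≤ k) :
    (((2 * p - 1).choose (p - 1) * ((2 * k).choose k) ^ 2 : ℕ) : ZMod (p ^ 2)) =
      ((16 ^ (p - 1) : ℕ) : ZMod (p ^ 2)) := by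
  haveI := Fact.mk hp
  haveI : NeZero (p ^ 2) := ⟨pow_ne_zero 2 hp.pos.ne'⟩
  set ph := ZMod.castHom (dvd_pow_self p two_ne_zero) (ZMod p) with hphi
  have hoddp : Odd p := ⟨k, by omega⟩
  have hp3 : 3 ≤ p := by
    have := hp.two_le; omega
  -- units
  have hunit : ∀ i : ℕ, 1 ≤ i → i < p → IsUnit ((i : ℕ) : ZMod (p ^ 2)) := by
    intro i h1 h2
    rw [ZMod.isUnit_iff_coprime]
    exact Nat.Coprime.pow_right 2
      (Nat.coprime_comm.mp ((Nat.Prime.coprime_iff_not_dvd hp).mpr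
        (Nat.not_dvd_of_pos_of_lt h1 h2)))
  have hFne : ∀ i : ℕ, 1 ≤ i → i < p → ((i : ℕ) : ZMod p) ≠ 0 := by
    intro i h1 h2 h0
    have hd := (ZMod.natCast_eq_zero_iff _ _).mp h0
    have := Nat.le_of_dvd (by omega) hd
    omega
  have hphi_inv : ∀ i : ℕ, 1 ≤ i → i < p → ph (((i : ℕ) : ZMod (p ^ 2))⁻¹) = ((i : ℕ) : ZMod p)⁻¹ := by
    intro i h1 h2
    have hu := hunit i h1 h2
    have h3 : ((i : ℕ) : ZMod p) * ph (((i : ℕ) : ZMod (p ^ 2))⁻¹) = 1 := by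
      rw [← map_natCast ph i, ← map_mul, ZMod.mul_inv_of_unit _ hu, map_one]
    exact (inv_eq_of_mul_eq_one_right h3).symm
  have hpp : (p : ZMod (p ^ 2)) * (p : ZMod (p ^ 2)) = 0 := by
    have h := ZMod.natCast_self (p ^ 2)
    push_cast at h
    linear_combination h
  have hH : ∑ i ∈ Icc 1 (p - 1), ((i : ℕ) : ZMod p)⁻¹ = 0 := sum_inv_eq_zero p hp hoddp
  -- reindexing of even and odd parts
  have heven : ∀ g : ℕ → ZMod p,
      ∑ i ∈ (Icc 1 (p - 1)).filter (fun i => i % 2 = 0), g i = ∑ j ∈ Icc 1 k, g (2 * j) := by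
    intro g
    refine Finset.sum_nbij' (fun a => a / 2) (fun b => 2 * b) ?_ ?_ ?_ ?_ ?_ <;>
      intro a ha <;>
      simp only [Finset.mem_filter, Finset.mem_Icc] at * <;>
      first
        | omega
        | (congr 1; omega)
  have hodd' : ∀ g : ℕ → ZMod p,
      ∑ i ∈ (Icc 1 (p - 1)).filter (fun i => ¬ i % 2 = 0), g i =
        ∑ j ∈ Icc 1 k, g (p - 2 * j) := by
    intro g
    refine Finset.sum_nbij' (fun a => (p - a) / 2) (fun b => p - 2 * b) ?_ ?_ ?_ ?_ ?_ <;>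
      intro a ha <;>
      simp only [Finset.mem_filter, Finset.mem_Icc] at * <;>
      first
        | omega
        | (congr 1; omega)
  -- Eisenstein's congruence
  set w : ZMod (p ^ 2) := ∑ i ∈ Icc 1 (p - 1), (-1 : ZMod (p ^ 2)) ^ (i - 1) * ((i : ℕ) : ZMod (p ^ 2))⁻¹ with hw
  have hsumnat : (∑ i ∈ Icc 1 (p - 1), p.choose i) + 2 = 2 ^ p := by
    have h2 : Icc 1 (p - 1) = Ico 1 p := by
      rw [← Finset.Ico_add_one_right_eq_Icc]
      congr 1
      omega
    rw [h2, show (2:ℕ)^p = ∑ i ∈ Finset.range (p+1), p.choose i from (Nat.sum_range_choose p).symm,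
      Finset.sum_range_succ, Finset.range_eq_Ico, Finset.sum_eq_sum_Ico_succ_bot hp.pos]
    simp only [Nat.choose_self, Nat.choose_zero_right, zero_add]
    omega
  have hterm : ∀ i ∈ Icc 1 (p - 1),
      ((p.choose i : ℕ) : ZMod (p ^ 2)) = (p : ZMod (p ^ 2)) * ((-1 : ZMod (p ^ 2)) ^ (i - 1) * ((i : ℕ) : ZMod (p ^ 2))⁻¹) := by
    intro i hi
    simp only [Finset.mem_Icc] at hi
    have hu := hunit i hi.1 (by omega)
    have hnat : p.choose i * i = p * ((p - 1).choose (i - 1)) := by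
      have h := Nat.add_one_mul_choose_eq (p - 1) (i - 1)
      rw [show p - 1 + 1 = p by omega, show i - 1 + 1 = i by omega] at h
      exact h.symm
    have hcast : ((p.choose i : ℕ) : ZMod (p ^ 2)) * ((i : ℕ) : ZMod (p ^ 2)) =
        (p : ZMod (p ^ 2)) * (((p - 1).choose (i - 1) : ℕ) : ZMod (p ^ 2)) := by
      exact_mod_cast congrArg (Nat.cast : ℕ → ZMod (p ^ 2)) hnat
    have hred : (p : ZMod (p ^ 2)) * (((p - 1).choose (i - 1) : ℕ) : ZMod (p ^ 2)) =
        (p : ZMod (p ^ 2)) * ((-1 : ZMod (p ^ 2)) ^ (i - 1)) := by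
      apply pmul_cancel p hp
      rw [map_natCast, map_pow, map_neg, map_one]
      exact choose_sub_one p hp (i - 1) (by omega)
    calc ((p.choose i : ℕ) : ZMod (p ^ 2))
        = ((p.choose i : ℕ) : ZMod (p ^ 2)) * (((i : ℕ) : ZMod (p ^ 2)) * ((i : ℕ) : ZMod (p ^ 2))⁻¹) := by
          rw [ZMod.mul_inv_of_unit _ hu, mul_one]
      _ = (((p.choose i : ℕ) : ZMod (p ^ 2)) * ((i : ℕ) : ZMod (p ^ 2))) * ((i : ℕ) : ZMod (p ^ 2))⁻¹ := by ring
      _ = ((p : ZMod (p ^ 2)) * ((-1 : ZMod (p ^ 2)) ^ (i - 1))) * ((i : ℕ) : ZMod (p ^ 2))⁻¹ := by rw [hcast, hred]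
      _ = (p : ZMod (p ^ 2)) * ((-1 : ZMod (p ^ 2)) ^ (i - 1) * ((i : ℕ) : ZMod (p ^ 2))⁻¹) := by ring
  have hEis : (2 : ZMod (p ^ 2)) ^ p - 2 = (p : ZMod (p ^ 2)) * w := by
    have hc := congrArg (Nat.cast : ℕ → ZMod (p ^ 2)) hsumnat
    push_cast at hc
    rw [Finset.sum_congr rfl hterm, ← Finset.mul_sum, ← hw] at hc
    linear_combination -hc
  have h2ne : (2 : ZMod p) ≠ 0 := by
    have := hFne 2 (by omega) (by omega)
    simpa using this
  have hphw : ph w = - ∑ j ∈ Icc 1 k, ((j : ℕ) : ZMod p)⁻¹ := by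
    have h0 : ph w = ∑ i ∈ Icc 1 (p - 1), (-1 : ZMod p) ^ (i - 1) * ((i : ℕ) : ZMod p)⁻¹ := by
      rw [hw, map_sum]
      refine Finset.sum_congr rfl fun i hi => ?_
      simp only [Finset.mem_Icc] at hi
      rw [map_mul, map_pow, map_neg, map_one, hphi_inv i hi.1 (by omega)]
    rw [h0, ← Finset.sum_filter_add_sum_filter_not (Icc 1 (p - 1)) (fun i => i % 2 = 0)]
    rw [heven (fun i => (-1 : ZMod p) ^ (i - 1) * ((i : ℕ) : ZMod p)⁻¹),
      hodd' (fun i => (-1 : ZMod p) ^ (i - 1) * ((i : ℕ) : ZMod p)⁻¹)]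
    have he1 : ∀ j ∈ Icc 1 k, (-1 : ZMod p) ^ (2 * j - 1) * ((2 * j : ℕ) : ZMod p)⁻¹ =
        -(((2 : ZMod p))⁻¹ * ((j : ℕ) : ZMod p)⁻¹) := by
      intro j hj
      simp only [Finset.mem_Icc] at hj
      have hodd1 : Odd (2 * j - 1) := ⟨j - 1, by omega⟩
      rw [hodd1.neg_one_pow]
      push_cast
      rw [mul_inv]
      ring
    have he2 : ∀ j ∈ Icc 1 k, (-1 : ZMod p) ^ (p - 2 * j - 1) * ((p - 2 * j : ℕ) : ZMod p)⁻¹ =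
        -(((2 : ZMod p))⁻¹ * ((j : ℕ) : ZMod p)⁻¹) := by
      intro j hj
      simp only [Finset.mem_Icc] at hj
      have heven1 : Even (p - 2 * j - 1) := ⟨k - j, by omega⟩
      rw [heven1.neg_one_pow, one_mul]
      have hcast : ((p - 2 * j : ℕ) : ZMod p) = -((2 * j : ℕ) : ZMod p) := by
        rw [Nat.cast_sub (by omega), ZMod.natCast_self]
        ring
      rw [hcast, inv_neg]
      push_cast
      rw [mul_inv]
    rw [Finset.sum_congr rfl he1, Finset.sum_congr rfl he2,
      ← Finset.sum_add_distrib, ← Finset.sum_neg_distrib]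
    refine Finset.sum_congr rfl fun j hj => ?_
    have h22 : (2 : ZMod p) * (2 : ZMod p)⁻¹ = 1 := mul_inv_cancel₀ h2ne
    linear_combination (-(((j : ℕ) : ZMod p)⁻¹)) * h22
  -- Babbage
  have hBfact : (2 * p - 1).choose (p - 1) * (p - 1)! * p ! = (2 * p - 1)! := by
    have h := Nat.choose_mul_factorial_mul_factorial (show p - 1 ≤ 2 * p - 1 by omega)
    rwa [show 2 * p - 1 - (p - 1) = p by omega] at h
  have hprodfact : (2 * p - 1)! = p ! * ∏ j ∈ Icc 1 (p - 1), (p + j) := by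
    have h := fact_add_prod p (p - 1)
    rwa [show p + (p - 1) = 2 * p - 1 by omega] at h
  have hBB : (2 * p - 1).choose (p - 1) * (p - 1)! = ∏ j ∈ Icc 1 (p - 1), (p + j) := by
    apply Nat.eq_of_mul_eq_mul_right (Nat.factorial_pos p)
    rw [hBfact, hprodfact]
    ring
  have hBBR : (((2 * p - 1).choose (p - 1) : ℕ) : ZMod (p ^ 2)) * (((p - 1)! : ℕ) : ZMod (p ^ 2)) =
      ∏ j ∈ Icc 1 (p - 1), ((p : ZMod (p ^ 2)) + ((j : ℕ) : ZMod (p ^ 2))) := by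
    have h := congrArg (Nat.cast : ℕ → ZMod (p ^ 2)) hBB
    push_cast at h
    exact h
  rw [prod_add_of_sq_eq_zero (p : ZMod (p ^ 2)) hpp] at hBBR
  have hfcP : ∏ j ∈ Icc 1 (p - 1), ((j : ℕ) : ZMod (p ^ 2)) = (((p - 1)! : ℕ) : ZMod (p ^ 2)) := by
    rw [← Nat.cast_prod, prod_Icc_id_eq_factorial]
  have hV : (p : ZMod (p ^ 2)) * (∑ i ∈ Icc 1 (p - 1), ∏ j ∈ (Icc 1 (p - 1)).erase i, ((j : ℕ) : ZMod (p ^ 2))) =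
      (p : ZMod (p ^ 2)) * 0 := by
    apply pmul_cancel p hp
    rw [map_zero, map_sum]
    have hper : ∀ i ∈ Icc 1 (p - 1),
        ph (∏ j ∈ (Icc 1 (p - 1)).erase i, ((j : ℕ) : ZMod (p ^ 2))) =
          ((i : ℕ) : ZMod p)⁻¹ * ∏ j ∈ Icc 1 (p - 1), ((j : ℕ) : ZMod p) := by
      intro i hi
      simp only [Finset.mem_Icc] at hi
      rw [map_prod]
      simp only [map_natCast]
      have h := Finset.mul_prod_erase (Icc 1 (p - 1)) (fun j => ((j : ℕ) : ZMod p))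
        (a := i) (by simp only [Finset.mem_Icc]; omega)
      beta_reduce at h
      rw [← h, inv_mul_cancel_left₀ (hFne i hi.1 (by omega))]
    rw [Finset.sum_congr rfl hper, ← Finset.sum_mul, hH, zero_mul]
  rw [mul_zero] at hV
  rw [hV, add_zero, hfcP] at hBBR
  have hufac : IsUnit (((p - 1)! : ℕ) : ZMod (p ^ 2)) := by
    rw [ZMod.isUnit_iff_coprime]
    refine Nat.Coprime.pow_right 2 (Nat.coprime_comm.mp ?_)
    rw [Nat.Prime.coprime_iff_not_dvd hp, Nat.Prime.dvd_factorial hp]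
    omega
  have hBab : (((2 * p - 1).choose (p - 1) : ℕ) : ZMod (p ^ 2)) = 1 := by
    apply hufac.mul_right_cancel
    rw [hBBR, one_mul]
  -- Morley
  have hCk : (2 * k).choose k * k ! = 2 ^ k * ∏ j ∈ Icc 1 k, (2 * j - 1) := by
    have h1 := Nat.choose_mul_factorial_mul_factorial (show k ≤ 2 * k by omega)
    rw [show 2 * k - k = k by omega] at h1
    apply Nat.eq_of_mul_eq_mul_right (Nat.factorial_pos k)
    calc (2 * k).choose k * k ! * k ! = (2 * k)! := h1
      _ = 2 ^ k * k ! * ∏ j ∈ Icc 1 k, (2 * j - 1) := two_k_factorial k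
      _ = 2 ^ k * (∏ j ∈ Icc 1 k, (2 * j - 1)) * k ! := by ring
  have hre : ∏ j ∈ Icc 1 k, (2 * j - 1) = ∏ i ∈ Icc 1 k, (p - 2 * i) := by
    refine Finset.prod_nbij' (fun a => k + 1 - a) (fun b => k + 1 - b) ?_ ?_ ?_ ?_ ?_ <;>
      intro a ha <;>
      simp only [Finset.mem_Icc] at * <;>
      omega
  have hPR : ((∏ j ∈ Icc 1 k, (2 * j - 1) : ℕ) : ZMod (p ^ 2)) =
      ∏ i ∈ Icc 1 k, ((p : ZMod (p ^ 2)) + (-(2 * ((i : ℕ) : ZMod (p ^ 2))))) := by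
    rw [hre, Nat.cast_prod]
    refine Finset.prod_congr rfl fun i hi => ?_
    simp only [Finset.mem_Icc] at hi
    rw [Nat.cast_sub (by omega)]
    push_cast
    ring
  rw [prod_add_of_sq_eq_zero (p : ZMod (p ^ 2)) hpp] at hPR
  have hprodneg : ∏ i ∈ Icc 1 k, (-(2 * ((i : ℕ) : ZMod (p ^ 2)))) = (-2) ^ k * ((k ! : ℕ) : ZMod (p ^ 2)) := by
    have h1 : ∀ i ∈ Icc 1 k, (-(2 * ((i : ℕ) : ZMod (p ^ 2)))) = (-2) * ((i : ℕ) : ZMod (p ^ 2)) := by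
      intro i _; ring
    rw [Finset.prod_congr rfl h1, Finset.prod_mul_distrib, Finset.prod_const,
      Nat.card_Icc, show k + 1 - 1 = k by omega]
    congr 1
    rw [← Nat.cast_prod, prod_Icc_id_eq_factorial]
  set U : ℕ := ∑ i ∈ Icc 1 k, ∏ j ∈ (Icc 1 k).erase i, j with hU
  have hsumerase : ∑ i ∈ Icc 1 k, ∏ j ∈ (Icc 1 k).erase i, (-(2 * ((j : ℕ) : ZMod (p ^ 2)))) =
      (-2) ^ (k - 1) * ((U : ℕ) : ZMod (p ^ 2)) := by
    rw [hU]
    push_cast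
    rw [Finset.mul_sum]
    refine Finset.sum_congr rfl fun i hi => ?_
    have h1 : ∀ j ∈ (Icc 1 k).erase i, (-(2 * ((j : ℕ) : ZMod (p ^ 2)))) = (-2) * ((j : ℕ) : ZMod (p ^ 2)) := by
      intro j _; ring
    rw [Finset.prod_congr rfl h1, Finset.prod_mul_distrib, Finset.prod_const,
      Finset.card_erase_of_mem hi, Nat.card_Icc, show k + 1 - 1 - 1 = k - 1 by omega]
  have hphU : ph ((U : ℕ) : ZMod (p ^ 2)) = (∑ i ∈ Icc 1 k, ((i : ℕ) : ZMod p)⁻¹) *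
      ∏ j ∈ Icc 1 k, ((j : ℕ) : ZMod p) := by
    rw [map_natCast, hU]
    push_cast
    have hper : ∀ i ∈ Icc 1 k,
        ∏ j ∈ (Icc 1 k).erase i, ((j : ℕ) : ZMod p) =
          ((i : ℕ) : ZMod p)⁻¹ * ∏ j ∈ Icc 1 k, ((j : ℕ) : ZMod p) := by
      intro i hi
      simp only [Finset.mem_Icc] at hi
      have h := Finset.mul_prod_erase (Icc 1 k) (fun j => ((j : ℕ) : ZMod p))
        (a := i) (by simp only [Finset.mem_Icc]; omega)
      beta_reduce at h
      rw [← h, inv_mul_cancel_left₀ (hFne i hi.1 (by omega))]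
    rw [Finset.sum_congr rfl hper, ← Finset.sum_mul]
  have hpU : (p : ZMod (p ^ 2)) * ((U : ℕ) : ZMod (p ^ 2)) = (p : ZMod (p ^ 2)) * (-(w * ((k ! : ℕ) : ZMod (p ^ 2)))) := by
    apply pmul_cancel p hp
    rw [hphU, map_neg, map_mul, hphw, map_natCast]
    rw [← Nat.cast_prod, prod_Icc_id_eq_factorial]
    ring
  -- assemble Morley
  obtain ⟨m, hm⟩ : ∃ m, k = m + 1 := ⟨k - 1, by omega⟩
  have hMorleyMul : (((2 * k).choose k : ℕ) : ZMod (p ^ 2)) * ((k ! : ℕ) : ZMod (p ^ 2)) =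
      (-1 : ZMod (p ^ 2)) ^ k * 16 ^ k * ((k ! : ℕ) : ZMod (p ^ 2)) := by
    have hc : (((2 * k).choose k : ℕ) : ZMod (p ^ 2)) * ((k ! : ℕ) : ZMod (p ^ 2)) =
        (2 : ZMod (p ^ 2)) ^ k * ((∏ j ∈ Icc 1 k, (2 * j - 1) : ℕ) : ZMod (p ^ 2)) := by
      have h := congrArg (Nat.cast : ℕ → ZMod (p ^ 2)) hCk
      rw [Nat.cast_mul, Nat.cast_mul, Nat.cast_pow] at h
      exact_mod_cast h
    rw [hc, hPR, hprodneg, hsumerase, mul_add, ← mul_assoc ((p:ZMod (p ^ 2))) _ _]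
    rw [mul_comm ((p:ZMod (p ^ 2))) ((-2 : ZMod (p ^ 2)) ^ (k-1)), mul_assoc, hpU]
    have h2p : (p : ZMod (p ^ 2)) * (-(w * ((k ! : ℕ) : ZMod (p ^ 2)))) = -(((2:ZMod (p ^ 2))^p - 2) * ((k ! : ℕ) : ZMod (p ^ 2))) := by
      rw [hEis]; ring
    rw [h2p]
    have h2pow : (2 : ZMod (p ^ 2)) ^ p = 8 * (2 ^ m) * (2 ^ m) := by
      have e : (2 : ZMod (p ^ 2)) ^ p = (2 : ZMod (p ^ 2)) ^ (2 * m + 3) := by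
        congr 1
        omega
      rw [e, show 2 * m + 3 = m + m + 3 by ring, pow_add, pow_add]
      ring
    rw [hm, show m + 1 - 1 = m by omega, h2pow]
    have hn1 : (-2 : ZMod (p ^ 2)) ^ (m + 1) = (-1) ^ (m + 1) * 2 ^ (m + 1) := neg_pow 2 (m + 1)
    have hn2 : (-2 : ZMod (p ^ 2)) ^ m = (-1) ^ m * 2 ^ m := neg_pow 2 m
    have h16 : (16 : ZMod (p ^ 2)) ^ (m + 1) = (2 ^ (m + 1)) ^ 4 := by
      rw [show (16 : ZMod (p ^ 2)) = 2 ^ 4 by norm_num, ← pow_mul,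
        show 4 * (m + 1) = (m + 1) * 4 by ring, pow_mul]
    rw [hn1, hn2, h16, pow_succ (-1 : ZMod (p ^ 2)) m, pow_succ (2 : ZMod (p ^ 2)) m]
    ring
  have hukfac : IsUnit ((k ! : ℕ) : ZMod (p ^ 2)) := by
    rw [ZMod.isUnit_iff_coprime]
    refine Nat.Coprime.pow_right 2 (Nat.coprime_comm.mp ?_)
    rw [Nat.Prime.coprime_iff_not_dvd hp, Nat.Prime.dvd_factorial hp]
    omega
  have hMorley : (((2 * k).choose k : ℕ) : ZMod (p ^ 2)) = (-1 : ZMod (p ^ 2)) ^ k * 16 ^ k :=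
    hukfac.mul_right_cancel hMorleyMul
  -- conclude
  push_cast
  rw [hBab, hMorley, one_mul]
  have hsq : ((-1 : ZMod (p ^ 2)) ^ k) ^ 2 = 1 := by
    rw [← pow_mul, mul_comm, pow_mul]
    norm_num
  rw [mul_pow, hsq, one_mul, ← pow_mul, show p - 1 = k * 2 by omega]

lemma key1a (k : ℕ) :
    (k + 1) * ((4 * k + 1).choose (3 * k)) * ((3 * k).choose k) =
      (2 * k + 1) * ((4 * k + 1).choose (2 * k)) * ((2 * k).choose k) := by
  have hB : (3 * k).choose k * k ! * (2 * k)! = (3 * k)! := by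
    have h := Nat.choose_mul_factorial_mul_factorial (show k ≤ 3 * k by omega)
    rwa [show 3 * k - k = 2 * k by omega] at h
  have hA : (4 * k + 1).choose (3 * k) * (3 * k)! * (k + 1)! = (4 * k + 1)! := by
    have h := Nat.choose_mul_factorial_mul_factorial (show 3 * k ≤ 4 * k + 1 by omega)
    rwa [show 4 * k + 1 - 3 * k = k + 1 by omega] at h
  have hD : (2 * k).choose k * k ! * k ! = (2 * k)! := by
    have h := Nat.choose_mul_factorial_mul_factorial (show k ≤ 2 * k by omega)
    rwa [show 2 * k - k = k by omega] at h
  have hC : (4 * k + 1).choose (2 * k) * (2 * k)! * (2 * k + 1)! = (4 * k + 1)! := by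
    have h := Nat.choose_mul_factorial_mul_factorial (show 2 * k ≤ 4 * k + 1 by omega)
    rwa [show 4 * k + 1 - 2 * k = 2 * k + 1 by omega] at h
  apply Nat.eq_of_mul_eq_mul_right
    (show 0 < k ! * k ! * (2 * k)! * (2 * k + 1)! by positivity)
  have hL : ((k + 1) * ((4 * k + 1).choose (3 * k)) * ((3 * k).choose k)) *
      (k ! * k ! * (2 * k)! * (2 * k + 1)!) = (4 * k + 1)! * (2 * k + 1)! := by
    calc ((k + 1) * ((4 * k + 1).choose (3 * k)) * ((3 * k).choose k)) *
        (k ! * k ! * (2 * k)! * (2 * k + 1)!)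
        = ((3 * k).choose k * k ! * (2 * k)!) *
            ((4 * k + 1).choose (3 * k) * ((k + 1) * k !)) * (2 * k + 1)! := by ring
      _ = (3 * k)! * ((4 * k + 1).choose (3 * k) * (k + 1)!) * (2 * k + 1)! := by
            rw [hB, ← Nat.factorial_succ]
      _ = ((4 * k + 1).choose (3 * k) * (3 * k)! * (k + 1)!) * (2 * k + 1)! := by ring
      _ = (4 * k + 1)! * (2 * k + 1)! := by rw [hA]
  have hRt : ((2 * k + 1) * ((4 * k + 1).choose (2 * k)) * ((2 * k).choose k)) *
      (k ! * k ! * (2 * k)! * (2 * k + 1)!) = (4 * k + 1)! * (2 * k + 1)! := by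
    calc ((2 * k + 1) * ((4 * k + 1).choose (2 * k)) * ((2 * k).choose k)) *
        (k ! * k ! * (2 * k)! * (2 * k + 1)!)
        = ((2 * k).choose k * k ! * k !) *
            ((4 * k + 1).choose (2 * k) * (2 * k)! * (2 * k + 1)!) * (2 * k + 1) := by ring
      _ = (2 * k)! * (4 * k + 1)! * (2 * k + 1) := by rw [hD, hC]
      _ = (4 * k + 1)! * ((2 * k + 1) * (2 * k)!) := by ring
      _ = (4 * k + 1)! * (2 * k + 1)! := by rw [← Nat.factorial_succ]
  rw [hL, hRt]

theorem stmt_10 (p : ℕ) (hp : p.Prime) (hodd : Odd p) (k : ℕ) (hk : k = (p - 1) / 2) :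
    (((p + 2 * k).choose (3 * k) : ℤ) * ((3 * k).choose k : ℤ) * ((2 * k).choose k : ℤ) *
          ((k : ℤ) - p)
        = -(p : ℤ) * ((2 * p - 1).choose (p - 1) : ℤ) * ((p - 1).choose ((p - 1) / 2) : ℤ) ^ 2) ∧
      (((p + 2 * k).choose (3 * k) : ℤ) * ((3 * k).choose k : ℤ) * ((2 * k).choose k : ℤ) *
          ((k : ℤ) - p)
        ≡ -(p : ℤ) * 16 ^ (p - 1) [ZMOD (p ^ 3 : ℕ)]) := by
  obtain ⟨m, hm⟩ := hodd
  have hp2 := hp.two_le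
  have hpk : p = 2 * k + 1 := by omega
  have hk1 : 1 ≤ k := by omega
  have e1 : p + 2 * k = 4 * k + 1 := by omega
  have e2 : 2 * p - 1 = 4 * k + 1 := by omega
  have e3 : p - 1 = 2 * k := by omega
  have e4 : (p - 1) / 2 = k := by omega
  have e5 : (p - 1).choose ((p - 1) / 2) = (2 * k).choose k := by rw [e4, e3]
  have h1 : ((p + 2 * k).choose (3 * k) : ℤ) * ((3 * k).choose k : ℤ) *
      ((2 * k).choose k : ℤ) * ((k : ℤ) - p)
      = -(p : ℤ) * ((2 * p - 1).choose (p - 1) : ℤ) *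
        ((p - 1).choose ((p - 1) / 2) : ℤ) ^ 2 := by
    rw [e1, e2, e5, e3]
    have hc := congrArg (Nat.cast : ℕ → ℤ) (key1a k)
    push_cast at hc
    have hkp : (k : ℤ) - p = -((k : ℤ) + 1) := by
      rw [hpk]; push_cast; ring
    rw [hkp, hpk]
    push_cast
    linear_combination (-(((2 * k).choose k : ℕ) : ℤ)) * hc
  refine ⟨h1, ?_⟩
  rw [h1]
  have hnm : (2 * p - 1).choose (p - 1) * ((2 * k).choose k) ^ 2 ≡ 16 ^ (p - 1) [MOD p ^ 2] :=
    (ZMod.natCast_eq_natCast_iff _ _ _).mp (key_cong p k hp hpk hk1)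
  have hzm : (((2 * p - 1).choose (p - 1) * ((2 * k).choose k) ^ 2 : ℕ) : ℤ) ≡
      ((16 ^ (p - 1) : ℕ) : ℤ) [ZMOD ((p ^ 2 : ℕ) : ℤ)] := Int.natCast_modEq_iff.mpr hnm
  have h3 := (Int.ModEq.mul_left' (c := (p : ℤ)) hzm).neg
  have hLe : -(p : ℤ) * ((2 * p - 1).choose (p - 1) : ℤ) *
      ((p - 1).choose ((p - 1) / 2) : ℤ) ^ 2 =
      -((p : ℤ) * (((2 * p - 1).choose (p - 1) * ((2 * k).choose k) ^ 2 : ℕ) : ℤ)) := by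
    rw [e5]
    push_cast
    ring
  have hRe : -(p : ℤ) * 16 ^ (p - 1) = -((p : ℤ) * ((16 ^ (p - 1) : ℕ) : ℤ)) := by
    push_cast
    ring
  have hMe : ((p ^ 3 : ℕ) : ℤ) = (p : ℤ) * ((p ^ 2 : ℕ) : ℤ) := by
    push_cast
    ring
  rw [hLe, hRe, hMe]
  exact h3
end

section
/- Let p be an odd prime. Then, in the field ℤ/pℤ, ∑_{k=0}^{p-1} C(2k,k)·f_k·((-16)^k)^{-1} = ∑_{m=0}^{(p-1)/2} C((p-1)/2, m)·f_m·(4^m)^{-1}, where (x)^{-1} denotes the multiplicative inverse modulo p. -/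
theorem stmt_13 (p : ℕ) (hp : p.Prime) (hodd : Odd p) :
    ∑ k ∈ Finset.range p,
        ((2 * k).choose k : ZMod p) * (franel k : ZMod p) * ((-16 : ZMod p) ^ k)⁻¹
      = ∑ m ∈ Finset.range ((p - 1) / 2 + 1),
          (((p - 1) / 2).choose m : ZMod p) * (franel m : ZMod p) * ((4 : ZMod p) ^ m)⁻¹ := by
  haveI : Fact p.Prime := ⟨hp⟩
  set n := (p - 1) / 2 with hn
  have hp2 : p ≠ 2 := by
    rintro rfl
    exact (Nat.not_odd_iff_even.mpr even_two) hodd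
  have h2 : (2 : ZMod p) ≠ 0 := by
    intro h
    have : p ∣ 2 := by
      have := (ZMod.natCast_eq_zero_iff 2 p).mp (by exact_mod_cast h)
      exact this
    exact hp2 ((Nat.prime_dvd_prime_iff_eq hp Nat.prime_two).mp this)
  have h4 : (4 : ZMod p) ≠ 0 := by
    intro h
    apply h2
    have : (2 : ZMod p) * 2 = 0 := by rw [show (2:ZMod p)*2 = 4 by norm_num, h]
    rcases mul_eq_zero.mp this with h' | h' <;> exact h'
  have hpos : 0 < p := hp.pos
  have h2n : 2 * n = p - 1 := by
    rw [hn, Nat.mul_div_cancel']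
    obtain ⟨m, hm⟩ := hodd
    omega
  have hnlt : n < p := by omega
  have hcastn : (2 : ZMod p) * (n : ZMod p) = -1 := by
    have : ((2 * n : ℕ) : ZMod p) = ((p - 1 : ℕ) : ZMod p) := by rw [h2n]
    push_cast at this
    rw [this, Nat.cast_sub hp.one_lt.le, ZMod.natCast_self]
    simp
  have hne : ∀ k : ℕ, k < p → ((k : ZMod p) : ZMod p) ≠ 0 → True := fun _ _ _ => trivial
  have hcast_ne : ∀ k : ℕ, 0 < k → k < p → ((k : ZMod p)) ≠ 0 := by
    intro k hk0 hkp h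
    have : p ∣ k := (ZMod.natCast_eq_zero_iff k p).mp h
    exact absurd (Nat.le_of_dvd hk0 this) (not_le.mpr hkp)
  -- key lemma
  have key : ∀ k, k < p → ((2 * k).choose k : ZMod p) = (-4) ^ k * (n.choose k : ZMod p) := by
    intro k
    induction k with
    | zero => intro _; simp
    | succ k ih =>
      intro hk1p
      have hkp : k < p := by omega
      have ihk := ih hkp
      by_cases hkn : k + 1 ≤ n
      · -- use recurrences
        have hk1ne : ((k : ZMod p) + 1) ≠ 0 := by
          have := hcast_ne (k + 1) (Nat.succ_pos k) hk1p
          push_cast at this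
          exact this
        have hcb : ((k : ZMod p) + 1) * ((2 * (k + 1)).choose (k + 1) : ZMod p)
            = 2 * (2 * k + 1) * ((2 * k).choose k : ZMod p) := by
          have := Nat.succ_mul_centralBinom_succ k
          simp only [Nat.centralBinom] at this
          have := congrArg (fun x : ℕ => (x : ZMod p)) this
          push_cast at this
          convert this using 2 <;> push_cast <;> ring
        have hch : ((n.choose (k + 1) : ℕ) : ZMod p) * ((k : ZMod p) + 1)
            = (n.choose k : ZMod p) * ((n : ZMod p) - (k : ZMod p)) := by
          have h := Nat.choose_succ_right_eq n k
          have := congrArg (fun x : ℕ => (x : ZMod p)) h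
          push_cast [Nat.cast_sub (by omega : k ≤ n)] at this
          convert this using 2
        -- multiply target by 2*(k+1)
        have h2k1 : (2 : ZMod p) * ((k : ZMod p) + 1) ≠ 0 := mul_ne_zero h2 hk1ne
        have hmain : (2 * ((k : ZMod p) + 1)) * ((2 * (k + 1)).choose (k + 1) : ZMod p)
            = (2 * ((k : ZMod p) + 1)) * ((-4) ^ (k + 1) * (n.choose (k + 1) : ZMod p)) := by
          calc (2 * ((k : ZMod p) + 1)) * ((2 * (k + 1)).choose (k + 1) : ZMod p)
              = 2 * (((k : ZMod p) + 1) * ((2 * (k + 1)).choose (k + 1) : ZMod p)) := by ring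
            _ = 2 * (2 * (2 * k + 1) * ((2 * k).choose k : ZMod p)) := by rw [hcb]
            _ = 2 * (2 * (2 * k + 1) * ((-4) ^ k * (n.choose k : ZMod p))) := by rw [ihk]
            _ = (-4) ^ (k+1) * ((n.choose k : ZMod p) * (-(2 * (k:ZMod p) + 1))) := by
                ring
            _ = (-4) ^ (k+1) * ((n.choose k : ZMod p) * (2 * ((n : ZMod p) - k))) := by
                congr 1
                congr 1
                have : (2 : ZMod p) * ((n : ZMod p) - k) = 2 * n - 2 * k := by ring
                rw [this, hcastn]
                ring
            _ = (2 * ((k : ZMod p) + 1)) * ((-4) ^ (k + 1) * (n.choose (k + 1) : ZMod p)) := by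
                linear_combination ((-4 : ZMod p) ^ (k + 1) * 2) * hch.symm
        exact mul_left_cancel₀ h2k1 hmain
      · -- k + 1 > n : both sides vanish
        have hch0 : n.choose (k + 1) = 0 := Nat.choose_eq_zero_of_lt (by omega)
        have hdvd : p ∣ (2 * (k + 1)).choose (k + 1) := by
          apply hp.dvd_choose hk1p
          · omega
          · omega
        have : ((2 * (k + 1)).choose (k + 1) : ZMod p) = 0 :=
          (ZMod.natCast_eq_zero_iff _ p).mpr hdvd
        rw [this, hch0]
        simp
  -- rewrite terms
  have hterm : ∀ k ∈ Finset.range p,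
      ((2 * k).choose k : ZMod p) * (franel k : ZMod p) * ((-16 : ZMod p) ^ k)⁻¹
        = (n.choose k : ZMod p) * (franel k : ZMod p) * ((4 : ZMod p) ^ k)⁻¹ := by
    intro k hk
    rw [Finset.mem_range] at hk
    rw [key k hk]
    have h16 : (-16 : ZMod p) ^ k = (-4 : ZMod p) ^ k * (4 : ZMod p) ^ k := by
      rw [← mul_pow]; norm_num
    have h4k : ((-4 : ZMod p) ^ k) ≠ 0 := pow_ne_zero _ (neg_ne_zero.mpr h4)
    rw [h16, mul_inv]
    field_simp
  rw [Finset.sum_congr rfl hterm]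
  symm
  apply Finset.sum_subset
  · intro x hx
    rw [Finset.mem_range] at *
    omega
  · intro x _ hx
    rw [Finset.mem_range, not_lt] at hx
    rw [Nat.choose_eq_zero_of_lt (by omega)]
    simp
end

section
/- Let n be an odd nonnegative integer. Then ∑_{k=0}^{n} (-1)^k·C(n,k)·C(3k,k)·C(3n−3k, n−k) = 0. -/
theorem stmt_16 (n : ℕ) (hn : Odd n) :
    ∑ k ∈ Finset.range (n + 1),
        (-1 : ℤ) ^ k * (n.choose k : ℤ) * ((3 * k).choose k : ℤ) *
          ((3 * n - 3 * k).choose (n - k) : ℤ) = 0 := by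
  set f : ℕ → ℤ := fun k => (-1 : ℤ) ^ k * (n.choose k : ℤ) * ((3 * k).choose k : ℤ) *
      ((3 * n - 3 * k).choose (n - k) : ℤ) with hf
  have hrefl := Finset.sum_range_reflect f (n + 1)
  have hterm : ∀ k ∈ Finset.range (n + 1), f (n + 1 - 1 - k) = - f k := by
    intro k hk
    have hk' : k ≤ n := Nat.lt_succ_iff.mp (Finset.mem_range.mp hk)
    have h1 : n + 1 - 1 - k = n - k := by omega
    have h2 : n - (n - k) = k := by omega
    have h3 : 3 * n - 3 * (n - k) = 3 * k := by omega
    have hsign : (-1 : ℤ) ^ (n - k) = - (-1 : ℤ) ^ k := by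
      have : (-1 : ℤ) ^ (n - k) * (-1) ^ k = (-1) ^ n := by
        rw [← pow_add]; congr 1; omega
      have hn' : (-1 : ℤ) ^ n = -1 := Odd.neg_one_pow hn
      have hk2 : ((-1 : ℤ) ^ k) * ((-1 : ℤ) ^ k) = 1 := by
        rw [← pow_add, Even.neg_one_pow ⟨k, rfl⟩]
      calc (-1 : ℤ) ^ (n - k) = (-1 : ℤ) ^ (n - k) * ((-1) ^ k * (-1) ^ k) := by
            rw [hk2, mul_one]
        _ = ((-1 : ℤ) ^ (n - k) * (-1) ^ k) * (-1) ^ k := by ring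
        _ = - (-1 : ℤ) ^ k := by rw [this, hn']; ring
    have h4 : 3 * n - 3 * k = 3 * (n - k) := by omega
    simp only [hf, h1, h2, h3, h4, Nat.choose_symm hk', hsign]
    ring
  have := Finset.sum_congr rfl hterm
  rw [this, Finset.sum_neg_distrib] at hrefl
  linarith [hrefl]
end

section
/- Let p be a prime, let a be a positive integer, and let k be an integer with 0 ≤ k ≤ p-1. Then C(a·p − 1, k)·C(a·p + k, k) ≡ (-1)^k (mod p²). -/
theorem stmt_17 (p : ℕ) (hp : p.Prime) (a : ℕ) (ha : 0 < a) (k : ℕ) (hk : k ≤ p - 1) :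
    (((a * p - 1).choose k : ℤ) * ((a * p + k).choose k : ℤ))
      ≡ (-1) ^ k [ZMOD (p ^ 2 : ℕ)] := by
  have hk' : k < p := lt_of_le_of_lt hk (Nat.sub_lt hp.pos one_pos)
  rw [← ZMod.intCast_eq_intCast_iff]
  set R := ZMod (p ^ 2) with hR
  have hap : p ≤ a * p := Nat.le_mul_of_pos_left p ha
  have hu : IsUnit (k.factorial : R) := by
    rw [ZMod.isUnit_iff_coprime]
    have h1 : Nat.Coprime (k.factorial) p := by
      rw [Nat.coprime_comm, hp.coprime_iff_not_dvd]
      intro h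
      exact absurd (hp.dvd_factorial.mp h) (not_le.mpr hk')
    exact h1.pow_right 2
  have hp2 : ((a * p : ℕ) : R) ^ 2 = 0 := by
    push_cast
    rw [Nat.cast_mul (α := R), mul_pow]
    have : ((p : R)) ^ 2 = ((p ^ 2 : ℕ) : R) := by push_cast; ring
    rw [this, ZMod.natCast_self, mul_zero]
  have h1 : ((a * p - 1).descFactorial k : R) =
      ∏ i ∈ Finset.range k, (((a * p : ℕ) : R) - (i + 1)) := by
    rw [Nat.descFactorial_eq_prod_range, Nat.cast_prod]
    refine Finset.prod_congr rfl fun i hi => ?_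
    simp only [Finset.mem_range] at hi
    have hi' : i + 1 ≤ a * p := le_trans (by omega) hap
    rw [show a * p - 1 - i = a * p - (i + 1) by omega, Nat.cast_sub hi']
    push_cast; ring
  have h2 : ((a * p + k).descFactorial k : R) =
      ∏ i ∈ Finset.range k, (((a * p : ℕ) : R) + (i + 1)) := by
    rw [Nat.descFactorial_eq_prod_range, Nat.cast_prod, ← Finset.prod_range_reflect]
    refine Finset.prod_congr rfl fun i hi => ?_
    simp only [Finset.mem_range] at hi
    rw [show a * p + k - (k - 1 - i) = a * p + (i + 1) by omega]
    push_cast; rw [Nat.cast_mul (α := R)]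
  have key : (k.factorial : R) * (k.factorial : R) *
      ((((a * p - 1).choose k : ℕ) : R) * (((a * p + k).choose k : ℕ) : R)) =
      (k.factorial : R) * (k.factorial : R) * ((-1 : R) ^ k) := by
    have e1 : (k.factorial : R) * (((a * p - 1).choose k : ℕ) : R) =
        ((a * p - 1).descFactorial k : R) := by
      rw [Nat.descFactorial_eq_factorial_mul_choose]; push_cast; exact (Nat.cast_mul (α := R) _ _).symm
    have e2 : (k.factorial : R) * (((a * p + k).choose k : ℕ) : R) =
        ((a * p + k).descFactorial k : R) := by
      rw [Nat.descFactorial_eq_factorial_mul_choose]; push_cast; exact (Nat.cast_mul (α := R) _ _).symm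
    calc (k.factorial : R) * (k.factorial : R) *
        ((((a * p - 1).choose k : ℕ) : R) * (((a * p + k).choose k : ℕ) : R))
        = ((k.factorial : R) * (((a * p - 1).choose k : ℕ) : R)) *
          ((k.factorial : R) * (((a * p + k).choose k : ℕ) : R)) := by ring
      _ = ((a * p - 1).descFactorial k : R) * ((a * p + k).descFactorial k : R) := by
          rw [e1, e2]
      _ = ∏ i ∈ Finset.range k,
            ((((a * p : ℕ) : R) - (i + 1)) * (((a * p : ℕ) : R) + (i + 1))) := by
          rw [h1, h2, Finset.prod_mul_distrib]
      _ = ∏ i ∈ Finset.range k, (-(((i : R) + 1) ^ 2)) := by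
          refine Finset.prod_congr rfl fun i _ => ?_
          have : (((a * p : ℕ) : R) - (i + 1)) * (((a * p : ℕ) : R) + (i + 1)) =
              ((a * p : ℕ) : R) ^ 2 - ((i : R) + 1) ^ 2 := by ring
          rw [this, hp2, zero_sub]
      _ = (-1 : R) ^ k * (∏ i ∈ Finset.range k, ((i : R) + 1)) ^ 2 := by
          rw [← Finset.prod_pow]
          rw [show (fun i : ℕ => -(((i : R) + 1) ^ 2)) = fun i : ℕ => (-1 : R) * ((i : R) + 1) ^ 2 from funext fun i => by ring]
          rw [Finset.prod_mul_distrib, Finset.prod_const, Finset.card_range]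
      _ = (-1 : R) ^ k * (k.factorial : R) ^ 2 := by
          congr 1
          rw [← Finset.prod_range_add_one_eq_factorial, Nat.cast_prod]
          push_cast; ring
      _ = (k.factorial : R) * (k.factorial : R) * ((-1 : R) ^ k) := by ring
  have := (hu.mul hu).mul_left_cancel key
  push_cast
  exact this
end
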